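/- arXiv:0902.3056 — 3 statements merged into one kernel-verified Lean document; each statement's English description precedes it below -/
import Mathlib

section
/- Let E : X₁ × ⋯ × X_k → S be a classical-quantum channel on a k-fold product of finite sets. Then C(E) ≥ Σ_{i=1}^k min_{F_i ∈ C_i} C(F_i), where C_i is the set of E-derived channels on X_i. -/
open Matrix BigOperators
open scoped Kronecker ComplexOrder

noncomputable section

section QIT
variable {n : Type*} [Fintype n] [DecidableEq n]

/-- A density matrix: positive semidefinite with unit trace. -/
def IsDensity (ρ : Matrix n n ℂ) : Prop := ρ.PosSemidef ∧ ρ.trace = 1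

/-- Apply a real function to a Hermitian matrix via its spectral decomposition
(junk value `0` on non-Hermitian matrices). -/
def matFun (f : ℝ → ℝ) (A : Matrix n n ℂ) : Matrix n n ℂ :=
  if h : A.IsHermitian then
    (h.eigenvectorUnitary : Matrix n n ℂ) *
      Matrix.diagonal (fun i => (f (h.eigenvalues i) : ℂ)) *
      ((h.eigenvectorUnitary : Matrix n n ℂ))ᴴ
  else 0

/-- von Neumann entropy (in bits). -/
def vnEntropy (A : Matrix n n ℂ) : ℝ :=
  if h : A.IsHermitian then (∑ i, Real.negMulLog (h.eigenvalues i)) / Real.log 2 else 0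

/-- Quantum relative entropy `S(ρ‖σ) = Tr ρ (log ρ − log σ)` (in bits). -/
def relEntropy (ρ σ : Matrix n n ℂ) : ℝ :=
  ((ρ * (matFun Real.log ρ - matFun Real.log σ)).trace).re / Real.log 2

/-- Trace norm of a Hermitian matrix: sum of absolute values of eigenvalues. -/
def traceNorm (A : Matrix n n ℂ) : ℝ :=
  if h : A.IsHermitian then ∑ i, |h.eigenvalues i| else 0

end QIT

section Bipartite
variable {a b : Type*} [Fintype a] [Fintype b] [DecidableEq a] [DecidableEq b]

/-- Partial trace over the second subsystem. -/
def ptraceR (M : Matrix (a × b) (a × b) ℂ) : Matrix a a ℂ :=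
  fun i j => ∑ k, M (i, k) (j, k)

/-- Partial trace over the first subsystem. -/
def ptraceL (M : Matrix (a × b) (a × b) ℂ) : Matrix b b ℂ :=
  fun i j => ∑ k, M (k, i) (k, j)

/-- Quantum mutual information `I(A:B) = S(A) + S(B) − S(AB)` of a bipartite state. -/
def mutualInfo (ρ : Matrix (a × b) (a × b) ℂ) : ℝ :=
  vnEntropy (ptraceR ρ) + vnEntropy (ptraceL ρ) - vnEntropy ρ

end Bipartite

section CQ
variable {X m : Type*} [Fintype X] [Fintype m] [DecidableEq X] [DecidableEq m]

/-- The classical-quantum state `E_{x←p}[|x⟩⟨x| ⊗ ρ_x]`. -/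
def cqState (p : X → ℝ) (ρ : X → Matrix m m ℂ) : Matrix (X × m) (X × m) ℂ :=
  fun xi yj => if xi.1 = yj.1 then (p xi.1 : ℂ) * ρ xi.1 xi.2 yj.2 else 0

end CQ

/-- Probability distributions on a finite type. -/
def FinDist (X : Type*) [Fintype X] : Type _ :=
  {p : X → ℝ // (∀ x, 0 ≤ p x) ∧ ∑ x, p x = 1}

instance (X : Type*) [Fintype X] [Nonempty X] : Nonempty (FinDist X) := by
  refine ⟨⟨fun _ => 1 / Fintype.card X, fun x => by positivity, ?_⟩⟩
  have h : (Fintype.card X : ℝ) ≠ 0 := by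
    exact_mod_cast Fintype.card_ne_zero
  rw [Finset.sum_const, Finset.card_univ, nsmul_eq_mul]
  first
  | exact mul_one_div_cancel h
  | field_simp

/-- Capacity of a classical-quantum channel. -/
def capacity {X m : Type*} [Fintype X] [DecidableEq X] [Fintype m] [DecidableEq m]
    (E : X → Matrix m m ℂ) : ℝ :=
  ⨆ p : FinDist X, mutualInfo (cqState p.1 E)

/-- Kullback–Leibler divergence (in bits) between finitely supported distributions. -/
def klDiv {Y : Type*} [Fintype Y] (P Q : Y → ℝ) : ℝ :=
  ∑ y, P y * Real.logb 2 (P y / Q y)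

/-- ℓ₁ distance between distributions. -/
def l1Dist {Y : Type*} [Fintype Y] (P Q : Y → ℝ) : ℝ := ∑ y, |P y - Q y|

/-- Binary entropy function (in bits). -/
def binH (p : ℝ) : ℝ := Real.binEntropy p / Real.log 2


/-- Plug the value `xi` into coordinate `i`, and `rest` into the remaining coordinates. -/
def insertAt {k : ℕ} {X : Fin k → Type} (i : Fin k) (xi : X i)
    (rest : ∀ j : {j : Fin k // j ≠ i}, X j.1) : ∀ j, X j :=
  fun j => if h : j = i then cast (congrArg X h.symm) xi else rest ⟨j, h⟩

namespace Stmt5Aux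
open Polynomial

variable {n : Type*} [Fintype n] [DecidableEq n]

lemma charpoly_conj {A W D V : Matrix n n ℂ} (hWV : W * V = 1)
    (hA : A = W * D * V) : A.charpoly = D.charpoly := by
  classical
  set f : Matrix n n ℂ →+* Matrix n n ℂ[X] := (Polynomial.C (R := ℂ)).mapMatrix with hf
  have hfWV : f W * f V = 1 := by rw [← _root_.map_mul, hWV, _root_.map_one]
  have hcomm : ∀ M : Matrix n n ℂ[X],
      Matrix.scalar n (X : ℂ[X]) * M = M * Matrix.scalar n (X : ℂ[X]) :=
    fun M => (Matrix.scalar_commute (X : ℂ[X]) (fun r => Commute.all _ _) M).eq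
  have h3 : f W * Matrix.scalar n (X : ℂ[X]) * f V = Matrix.scalar n (X : ℂ[X]) := by
    rw [← hcomm (f W), mul_assoc, hfWV, mul_one]
  have key : A.charmatrix = f W * D.charmatrix * f V := by
    rw [Matrix.charmatrix, Matrix.charmatrix, hA]
    have h2 : f (W * D * V) = f W * f D * f V := by
      rw [_root_.map_mul, _root_.map_mul]
    rw [mul_sub, sub_mul, h2, h3]
  have hdet1 : (f W).det * (f V).det = 1 := by
    rw [← Matrix.det_mul, hfWV, Matrix.det_one]
  rw [Matrix.charpoly, Matrix.charpoly, key, Matrix.det_mul, Matrix.det_mul]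
  calc (f W).det * D.charmatrix.det * (f V).det
      = D.charmatrix.det * ((f W).det * (f V).det) := by ring
    _ = D.charmatrix.det := by rw [hdet1, mul_one]

lemma charpoly_diag (d : n → ℂ) :
    (Matrix.diagonal d).charpoly = ∏ i, (X - C (d i)) := by
  have h : Matrix.charmatrix (Matrix.diagonal d) =
      Matrix.diagonal (fun i => (X : ℂ[X]) - C (d i)) := by
    ext i j
    by_cases h : i = j
    · subst h; simp [Matrix.charmatrix_apply, Matrix.diagonal_apply]
    · simp [Matrix.charmatrix_apply, Matrix.diagonal_apply, h]
  rw [Matrix.charpoly, h, Matrix.det_diagonal]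

/-- The multiset of eigenvalues (with multiplicity) is characterized by any unitary
diagonalization. Consequently sums of `f` over eigenvalues can be computed from any
diagonalization. -/
lemma sum_f_eigenvalues {A : Matrix n n ℂ} (hA : A.IsHermitian) (W : Matrix n n ℂ)
    (hW : W * Wᴴ = 1) (d : n → ℝ)
    (hdec : A = W * Matrix.diagonal (fun i => (d i : ℂ)) * Wᴴ) (f : ℝ → ℝ) :
    ∑ i, f (hA.eigenvalues i) = ∑ i, f (d i) := by
  classical
  -- charpoly computed two ways
  have h1 : A.charpoly = ∏ i, (X - C ((hA.eigenvalues i : ℂ))) := by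
    have hu : (hA.eigenvectorUnitary : Matrix n n ℂ) *
        star (hA.eigenvectorUnitary : Matrix n n ℂ) = 1 :=
      (Matrix.mem_unitaryGroup_iff).mp hA.eigenvectorUnitary.2
    have hdiag := hA.spectral_theorem
    have := charpoly_conj (A := A) (W := (hA.eigenvectorUnitary : Matrix n n ℂ))
      (D := Matrix.diagonal (RCLike.ofReal ∘ hA.eigenvalues))
      (V := star (hA.eigenvectorUnitary : Matrix n n ℂ)) hu hdiag
    rw [this]
    exact charpoly_diag _
  have h2 : A.charpoly = ∏ i, (X - C ((d i : ℂ))) := by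
    rw [charpoly_conj hW hdec]
    exact charpoly_diag _
  -- multiset equality over ℂ
  have hprod : (Finset.univ.val.map fun i => ((hA.eigenvalues i : ℂ))) =
      (Finset.univ.val.map fun i => ((d i : ℂ))) := by
    have e1 : ((Finset.univ.val.map fun i => ((hA.eigenvalues i : ℂ))).map
        fun a => (X : ℂ[X]) - C a).prod = ∏ i, (X - C ((hA.eigenvalues i : ℂ))) := by
      rw [Multiset.map_map]; rfl
    have e2 : ((Finset.univ.val.map fun i => ((d i : ℂ))).map
        fun a => (X : ℂ[X]) - C a).prod = ∏ i, (X - C ((d i : ℂ))) := by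
      rw [Multiset.map_map]; rfl
    have := congrArg Polynomial.roots (e1.trans (h1.symm.trans (h2.trans e2.symm)))
    rwa [Polynomial.roots_multiset_prod_X_sub_C, Polynomial.roots_multiset_prod_X_sub_C] at this
  -- descend to ℝ multisets
  have hreal : (Finset.univ.val.map hA.eigenvalues) = (Finset.univ.val.map d) := by
    apply Multiset.map_injective (f := (fun r : ℝ => (r : ℂ))) Complex.ofReal_injective
    rw [Multiset.map_map, Multiset.map_map]
    exact hprod
  -- sums
  calc ∑ i, f (hA.eigenvalues i) = ((Finset.univ.val.map hA.eigenvalues).map f).sum := by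
        rw [Multiset.map_map]; rfl
    _ = ((Finset.univ.val.map d).map f).sum := by rw [hreal]
    _ = ∑ i, f (d i) := by rw [Multiset.map_map]; rfl


section BlockDiag
variable {A' : Type*} [Fintype A'] [DecidableEq A'] {m : Type*} [Fintype m] [DecidableEq m]

/-- Block diagonal matrix over index `A' × m`. -/
def bdiag (B : A' → Matrix m m ℂ) : Matrix (A' × m) (A' × m) ℂ :=
  fun p q => if p.1 = q.1 then B p.1 p.2 q.2 else 0

lemma bdiag_mul (B C : A' → Matrix m m ℂ) :
    bdiag B * bdiag C = bdiag (fun x => B x * C x) := by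
  ext ⟨x, i⟩ ⟨y, j⟩
  simp only [Matrix.mul_apply, bdiag, Fintype.sum_prod_type]
  by_cases hxy : x = y
  · subst hxy
    rw [Finset.sum_eq_single x]
    · simp [Matrix.mul_apply]
    · intro z _ hz
      apply Finset.sum_eq_zero; intro k _
      rw [if_neg (fun h => hz h.symm), zero_mul]
    · intro h; exact absurd (Finset.mem_univ x) h
  · rw [if_neg hxy]
    apply Finset.sum_eq_zero; intro z _
    apply Finset.sum_eq_zero; intro k _
    by_cases hxz : x = z
    · subst hxz; rw [if_neg hxy, mul_zero]
    · rw [if_neg hxz, zero_mul]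

lemma bdiag_conjTranspose (B : A' → Matrix m m ℂ) :
    (bdiag B)ᴴ = bdiag (fun x => (B x)ᴴ) := by
  ext ⟨x, i⟩ ⟨y, j⟩
  simp only [Matrix.conjTranspose_apply, bdiag]
  by_cases hxy : x = y
  · subst hxy; simp [Matrix.conjTranspose_apply]
  · rw [if_neg hxy, if_neg (fun h => hxy h.symm), star_zero]

lemma bdiag_one : bdiag (fun _ : A' => (1 : Matrix m m ℂ)) = 1 := by
  ext ⟨x, i⟩ ⟨y, j⟩
  simp only [bdiag, Matrix.one_apply, Prod.mk.injEq]
  by_cases hxy : x = y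
  · subst hxy
    by_cases hij : i = j <;> simp [hij]
  · simp [hxy]

lemma cqState_eq_bdiag (w : A' → ℝ) (ρ : A' → Matrix m m ℂ) :
    cqState w ρ = bdiag (fun x => (w x : ℂ) • ρ x) := by
  ext ⟨x, i⟩ ⟨y, j⟩
  simp [cqState, bdiag]

lemma diagonal_eq_bdiag (d : A' × m → ℂ) :
    Matrix.diagonal d = bdiag (fun x => Matrix.diagonal (fun k => d (x, k))) := by
  ext ⟨x, i⟩ ⟨y, j⟩
  simp only [bdiag, Matrix.diagonal_apply, Prod.mk.injEq]
  by_cases hxy : x = y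
  · subst hxy
    by_cases hij : i = j <;> simp [hij]
  · simp [hxy]

end BlockDiag

section CQSpectral
set_option linter.unusedSectionVars false
variable {A' : Type*} [Fintype A'] [DecidableEq A'] {m : Type*} [Fintype m] [DecidableEq m]

lemma isHermitian_of_decomp {n : Type*} [Fintype n] [DecidableEq n]
    {A W : Matrix n n ℂ} {d : n → ℝ}
    (hdec : A = W * Matrix.diagonal (fun i => (d i : ℂ)) * Wᴴ) : A.IsHermitian := by
  have hd : (Matrix.diagonal (fun i => (d i : ℂ)))ᴴ = Matrix.diagonal (fun i => (d i : ℂ)) := by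
    ext i j
    by_cases h : i = j
    · subst h; simp [Matrix.conjTranspose_apply, Complex.conj_ofReal]
    · simp [Matrix.conjTranspose_apply, Matrix.diagonal_apply, h, Ne.symm h]
  show _ᴴ = _
  rw [hdec, Matrix.conjTranspose_mul, Matrix.conjTranspose_mul,
    Matrix.conjTranspose_conjTranspose, hd, mul_assoc]

lemma vnEntropy_of_decomp {n : Type*} [Fintype n] [DecidableEq n]
    {A W : Matrix n n ℂ} {d : n → ℝ} (hW : W * Wᴴ = 1)
    (hdec : A = W * Matrix.diagonal (fun i => (d i : ℂ)) * Wᴴ) :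
    vnEntropy A = (∑ i, Real.negMulLog (d i)) / Real.log 2 := by
  have hA := isHermitian_of_decomp hdec
  rw [vnEntropy, dif_pos hA, sum_f_eigenvalues hA W hW d hdec]

lemma trace_of_decomp {n : Type*} [Fintype n] [DecidableEq n]
    {A W : Matrix n n ℂ} {d : n → ℝ} (hW : W * Wᴴ = 1)
    (hdec : A = W * Matrix.diagonal (fun i => (d i : ℂ)) * Wᴴ) :
    A.trace = ∑ i, (d i : ℂ) := by
  have hWW : Wᴴ * W = 1 := mul_eq_one_comm.mp hW
  rw [hdec, Matrix.trace_mul_cycle, hWW, one_mul, Matrix.trace_diagonal]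

lemma spectral_decomp {n : Type*} [Fintype n] [DecidableEq n]
    {A : Matrix n n ℂ} (h : A.IsHermitian) :
    A = (h.eigenvectorUnitary : Matrix n n ℂ) *
      Matrix.diagonal (fun i => ((h.eigenvalues i : ℝ) : ℂ)) *
      (h.eigenvectorUnitary : Matrix n n ℂ)ᴴ := by
  rw [← Matrix.star_eq_conjTranspose]
  exact h.spectral_theorem

lemma eigenvectorUnitary_unitary {n : Type*} [Fintype n] [DecidableEq n]
    {A : Matrix n n ℂ} (h : A.IsHermitian) :
    (h.eigenvectorUnitary : Matrix n n ℂ) * (h.eigenvectorUnitary : Matrix n n ℂ)ᴴ = 1 := by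
  rw [← Matrix.star_eq_conjTranspose]
  exact Matrix.mem_unitaryGroup_iff.mp h.eigenvectorUnitary.2

lemma sum_eigenvalues_eq_one {ρ : Matrix m m ℂ} (hρ : IsDensity ρ) (h : ρ.IsHermitian) :
    ∑ j, h.eigenvalues j = 1 := by
  have := trace_of_decomp (eigenvectorUnitary_unitary h) (spectral_decomp h)
  rw [hρ.2] at this
  have h2 : ((∑ j, h.eigenvalues j : ℝ) : ℂ) = ((1 : ℝ) : ℂ) := by
    push_cast
    rw [← this]
  exact_mod_cast h2

lemma cq_spectral (w : A' → ℝ) (ρ : A' → Matrix m m ℂ) (hρ : ∀ x, (ρ x).IsHermitian) :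
    cqState w ρ =
      bdiag (fun x => ((hρ x).eigenvectorUnitary : Matrix m m ℂ)) *
        Matrix.diagonal (fun p : A' × m => ((w p.1 * (hρ p.1).eigenvalues p.2 : ℝ) : ℂ)) *
        (bdiag (fun x => ((hρ x).eigenvectorUnitary : Matrix m m ℂ)))ᴴ := by
  rw [bdiag_conjTranspose, diagonal_eq_bdiag, bdiag_mul, bdiag_mul, cqState_eq_bdiag]
  refine congrArg bdiag ?_
  funext x
  have hdg : Matrix.diagonal (fun k => ((w x * (hρ x).eigenvalues k : ℝ) : ℂ)) =
      (w x : ℂ) • Matrix.diagonal (fun k => (((hρ x).eigenvalues k : ℝ) : ℂ)) := by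
    rw [← Matrix.diagonal_smul]
    refine congrArg Matrix.diagonal ?_
    funext k
    simp only [Pi.smul_apply, smul_eq_mul, Complex.ofReal_mul]
  rw [hdg, Matrix.mul_smul, Matrix.smul_mul]
  exact congrArg _ (spectral_decomp (hρ x))

lemma bdiagU_unitary (ρ : A' → Matrix m m ℂ) (hρ : ∀ x, (ρ x).IsHermitian) :
    bdiag (fun x => ((hρ x).eigenvectorUnitary : Matrix m m ℂ)) *
      (bdiag (fun x => ((hρ x).eigenvectorUnitary : Matrix m m ℂ)))ᴴ = 1 := by
  rw [bdiag_conjTranspose, bdiag_mul]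
  rw [show (fun x => ((hρ x).eigenvectorUnitary : Matrix m m ℂ) *
      ((hρ x).eigenvectorUnitary : Matrix m m ℂ)ᴴ) = fun _ => (1 : Matrix m m ℂ) from
    funext fun x => eigenvectorUnitary_unitary (hρ x)]
  exact bdiag_one

lemma vnEntropy_cqState (w : A' → ℝ) (ρ : A' → Matrix m m ℂ)
    (hρ : ∀ x, IsDensity (ρ x)) :
    vnEntropy (cqState w ρ) =
      (∑ x, Real.negMulLog (w x)) / Real.log 2 + ∑ x, w x * vnEntropy (ρ x) := by
  have hherm : ∀ x, (ρ x).IsHermitian := fun x => (hρ x).1.1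
  rw [vnEntropy_of_decomp (bdiagU_unitary ρ hherm) (cq_spectral w ρ hherm)]
  rw [Fintype.sum_prod_type]
  have key : ∀ x, (∑ j, Real.negMulLog (w x * (hherm x).eigenvalues j))
      = Real.negMulLog (w x) + w x * (∑ j, Real.negMulLog ((hherm x).eigenvalues j)) := by
    intro x
    rw [Finset.sum_congr rfl (fun j _ => Real.negMulLog_mul (w x) ((hherm x).eigenvalues j)),
      Finset.sum_add_distrib, ← Finset.sum_mul,
      sum_eigenvalues_eq_one (hρ x) (hherm x), one_mul, ← Finset.mul_sum]
  rw [Finset.sum_congr rfl (fun x _ => key x), Finset.sum_add_distrib, add_div]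
  congr 1
  rw [Finset.sum_div]
  apply Finset.sum_congr rfl
  intro x _
  rw [vnEntropy, dif_pos (hherm x)]
  ring

lemma ptraceR_cqState (w : A' → ℝ) (ρ : A' → Matrix m m ℂ) (hρ : ∀ x, IsDensity (ρ x)) :
    ptraceR (cqState w ρ) = Matrix.diagonal (fun x => (w x : ℂ)) := by
  ext x y
  by_cases hxy : x = y
  · subst hxy
    show (∑ k, cqState w ρ (x, k) (x, k)) = _
    have h1 : ∀ k, cqState w ρ (x, k) (x, k) = (w x : ℂ) * ρ x k k := fun k => if_pos rfl
    rw [Finset.sum_congr rfl (fun k _ => h1 k), ← Finset.mul_sum,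
      show (∑ k, ρ x k k) = Matrix.trace (ρ x) from rfl, (hρ x).2, mul_one,
      Matrix.diagonal_apply_eq]
  · show (∑ k, cqState w ρ (x, k) (y, k)) = _
    have h1 : ∀ k, cqState w ρ (x, k) (y, k) = 0 := fun k => if_neg hxy
    rw [Finset.sum_congr rfl (fun k _ => h1 k), Finset.sum_const, smul_zero,
      Matrix.diagonal_apply_ne _ hxy]

lemma ptraceL_cqState (w : A' → ℝ) (ρ : A' → Matrix m m ℂ) :
    ptraceL (cqState w ρ) = ∑ x, w x • ρ x := by
  ext i j
  show (∑ x, cqState w ρ (x, i) (x, j)) = _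
  rw [Matrix.sum_apply]
  apply Finset.sum_congr rfl
  intro x _
  show (if x = x then (w x : ℂ) * ρ x i j else 0) = (w x • ρ x) i j
  rw [if_pos rfl, Matrix.smul_apply]
  rw [Complex.real_smul]

lemma vnEntropy_diagonal (w : A' → ℝ) :
    vnEntropy (Matrix.diagonal (fun x => (w x : ℂ))) =
      (∑ x, Real.negMulLog (w x)) / Real.log 2 := by
  apply vnEntropy_of_decomp (W := 1)
  · rw [Matrix.conjTranspose_one, one_mul]
  · rw [Matrix.one_mul, Matrix.conjTranspose_one, Matrix.mul_one]

/-- Holevo form of the mutual information of a cq state. -/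
lemma mutualInfo_cqState (w : FinDist A') (ρ : A' → Matrix m m ℂ)
    (hρ : ∀ x, IsDensity (ρ x)) :
    mutualInfo (cqState w.1 ρ) =
      vnEntropy (∑ x, w.1 x • ρ x) - ∑ x, w.1 x * vnEntropy (ρ x) := by
  rw [mutualInfo, ptraceR_cqState _ _ hρ, ptraceL_cqState, vnEntropy_cqState _ _ hρ,
    vnEntropy_diagonal]
  ring

end CQSpectral

section DensityCap
set_option linter.unusedSectionVars false
variable {A' : Type*} [Fintype A'] [DecidableEq A'] {m : Type*} [Fintype m] [DecidableEq m]

lemma posSemidef_real_smul {c : ℝ} (hc : 0 ≤ c) {M : Matrix m m ℂ} (hM : M.PosSemidef) :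
    (c • M).PosSemidef := by
  constructor
  · apply Matrix.IsHermitian.ext
    intro i j
    simp only [Matrix.smul_apply, Complex.real_smul, star_mul', Complex.conj_ofReal]
    rw [hM.1.apply i j, Complex.star_def, Complex.conj_ofReal]
  · intro v
    have := hM.2 v
    have h2 := mul_nonneg (by exact_mod_cast hc : (0:ℂ) ≤ (c:ℂ)) this
    rw [Finsupp.mul_sum] at h2
    simp only [Finsupp.mul_sum] at h2
    refine le_of_le_of_eq h2 (Finsupp.sum_congr fun i _ => Finsupp.sum_congr fun j _ => ?_)
    rw [Matrix.smul_apply, Complex.real_smul]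
    ring

lemma isDensity_mix (w : FinDist A') (ρ : A' → Matrix m m ℂ) (hρ : ∀ x, IsDensity (ρ x)) :
    IsDensity (∑ x, w.1 x • ρ x) := by
  constructor
  · refine Finset.sum_induction _ _ (fun a b ha hb => ha.add hb) Matrix.PosSemidef.zero ?_
    exact fun x _ => posSemidef_real_smul (w.2.1 x) (hρ x).1
  · rw [Matrix.trace_sum]
    have : ∀ x, Matrix.trace (w.1 x • ρ x) = (w.1 x : ℂ) := by
      intro x
      rw [Matrix.trace_smul, (hρ x).2]
      rw [Complex.real_smul, mul_one]
    rw [Finset.sum_congr rfl fun x _ => this x]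
    rw [← Complex.ofReal_sum, w.2.2, Complex.ofReal_one]

lemma vnEntropy_density_nonneg {ρ : Matrix m m ℂ} (h : IsDensity ρ) : 0 ≤ vnEntropy ρ := by
  have hH := h.1.1
  have hnn : ∀ i, 0 ≤ hH.eigenvalues i := fun i => h.1.eigenvalues_nonneg i
  have hsum := sum_eigenvalues_eq_one h hH
  rw [vnEntropy, dif_pos hH]
  apply div_nonneg _ (Real.log_nonneg one_le_two)
  apply Finset.sum_nonneg
  intro i _
  apply Real.negMulLog_nonneg (hnn i)
  calc hH.eigenvalues i ≤ ∑ j, hH.eigenvalues j :=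
        Finset.single_le_sum (fun j _ => hnn j) (Finset.mem_univ i)
    _ = 1 := hsum

lemma negMulLog_le_one {x : ℝ} (hx : 0 ≤ x) : Real.negMulLog x ≤ 1 := by
  rcases eq_or_lt_of_le hx with h | h
  · rw [← h, Real.negMulLog_zero]; norm_num
  · have h1 : Real.log x⁻¹ ≤ x⁻¹ - 1 := Real.log_le_sub_one_of_pos (by positivity)
    rw [Real.log_inv] at h1
    have h2 : -Real.log x * x ≤ (x⁻¹ - 1) * x := by
      apply mul_le_mul_of_nonneg_right h1 hx
    rw [sub_mul, inv_mul_cancel₀ (ne_of_gt h)] at h2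
    calc Real.negMulLog x = -Real.log x * x := by rw [Real.negMulLog]; ring
      _ ≤ 1 - 1 * x := h2
      _ ≤ 1 := by nlinarith
    
lemma vnEntropy_density_le {ρ : Matrix m m ℂ} (h : IsDensity ρ) :
    vnEntropy ρ ≤ (Fintype.card m : ℝ) / Real.log 2 := by
  have hH := h.1.1
  rw [vnEntropy, dif_pos hH]
  have hs : (∑ i, Real.negMulLog (hH.eigenvalues i)) ≤ (Fintype.card m : ℝ) := by
    calc (∑ i, Real.negMulLog (hH.eigenvalues i)) ≤ ∑ _i : m, (1 : ℝ) :=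
          Finset.sum_le_sum (fun i _ => negMulLog_le_one (h.1.eigenvalues_nonneg i))
      _ = (Fintype.card m : ℝ) := by simp
  gcongr


end DensityCap

section Capacity
set_option linter.unusedSectionVars false
variable {A' : Type*} [Fintype A'] [DecidableEq A'] {m : Type*} [Fintype m] [DecidableEq m]

lemma mutualInfo_le_card (Φ : A' → Matrix m m ℂ) (hΦ : ∀ a, IsDensity (Φ a)) (w : FinDist A') :
    mutualInfo (cqState w.1 Φ) ≤ (Fintype.card m : ℝ) / Real.log 2 := by
  rw [mutualInfo_cqState w Φ hΦ]
  have h1 := vnEntropy_density_le (isDensity_mix w Φ hΦ)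
  have h2 : 0 ≤ ∑ x, w.1 x * vnEntropy (Φ x) :=
    Finset.sum_nonneg fun x _ => mul_nonneg (w.2.1 x) (vnEntropy_density_nonneg (hΦ x))
  linarith

lemma bddAbove_mutualInfo (Φ : A' → Matrix m m ℂ) (hΦ : ∀ a, IsDensity (Φ a)) :
    BddAbove (Set.range fun p : FinDist A' => mutualInfo (cqState p.1 Φ)) := by
  refine ⟨(Fintype.card m : ℝ) / Real.log 2, ?_⟩
  rintro _ ⟨p, rfl⟩
  exact mutualInfo_le_card Φ hΦ p

lemma le_capacity (Φ : A' → Matrix m m ℂ) (hΦ : ∀ a, IsDensity (Φ a)) (p : FinDist A') :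
    mutualInfo (cqState p.1 Φ) ≤ capacity Φ :=
  le_ciSup (bddAbove_mutualInfo Φ hΦ) p

lemma capacity_le [Nonempty A'] (Φ : A' → Matrix m m ℂ) {c : ℝ}
    (h : ∀ p : FinDist A', mutualInfo (cqState p.1 Φ) ≤ c) : capacity Φ ≤ c :=
  ciSup_le h

/-- point mass distribution -/
def deltaDist (a₀ : A') : FinDist A' :=
  ⟨fun a => if a = a₀ then 1 else 0, fun a => by by_cases h : a = a₀ <;> simp [h], by
    simp [Finset.sum_ite_eq']⟩

lemma capacity_nonneg [Nonempty A'] (Φ : A' → Matrix m m ℂ) (hΦ : ∀ a, IsDensity (Φ a)) :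
    0 ≤ capacity Φ := by
  have a₀ : A' := Classical.arbitrary A'
  have hmi : mutualInfo (cqState (deltaDist a₀).1 Φ) = 0 := by
    rw [mutualInfo_cqState _ Φ hΦ]
    have hσ : (∑ x, (deltaDist a₀).1 x • Φ x) = Φ a₀ := by
      rw [show (fun x => (deltaDist a₀).1 x • Φ x)
          = fun x => if x = a₀ then Φ x else 0 from ?_]
      · rw [Finset.sum_ite_eq' Finset.univ a₀]
        simp
      · funext x
        by_cases h : x = a₀ <;> simp [deltaDist, h]
    have hs : (∑ x, (deltaDist a₀).1 x * vnEntropy (Φ x)) = vnEntropy (Φ a₀) := by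
      rw [show (fun x => (deltaDist a₀).1 x * vnEntropy (Φ x))
          = fun x => if x = a₀ then vnEntropy (Φ x) else 0 from ?_]
      · rw [Finset.sum_ite_eq' Finset.univ a₀]
        simp
      · funext x
        by_cases h : x = a₀ <;> simp [deltaDist, h]
    rw [hσ, hs, sub_self]
  calc (0:ℝ) = mutualInfo (cqState (deltaDist a₀).1 Φ) := hmi.symm
    _ ≤ capacity Φ := le_capacity Φ hΦ _

end Capacity

section InsertAt
set_option linter.unusedSectionVars false

/-- Generalization of `insertAt` to an arbitrary index type. -/
def insertAtG {ι : Type} [DecidableEq ι] {X : ι → Type} (i : ι) (xi : X i)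
    (rest : ∀ j : {j : ι // j ≠ i}, X j.1) : ∀ j, X j :=
  fun j => if h : j = i then cast (congrArg X h.symm) xi else rest ⟨j, h⟩

variable {ι : Type} [DecidableEq ι] {X : ι → Type}

lemma insertAtG_apply_self (i : ι) (xi : X i) (rest : ∀ j : {j : ι // j ≠ i}, X j.1) :
    insertAtG i xi rest i = xi := by
  rw [insertAtG, dif_pos rfl]
  exact cast_eq _ xi

lemma insertAtG_apply_ne (i : ι) (xi : X i) (rest : ∀ j : {j : ι // j ≠ i}, X j.1)
    {j : ι} (h : j ≠ i) : insertAtG i xi rest j = rest ⟨j, h⟩ := by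
  rw [insertAtG, dif_neg h]

lemma restrict_insertAtG (i : ι) (xi : X i) (rest : ∀ j : {j : ι // j ≠ i}, X j.1) :
    (fun j : {j : ι // j ≠ i} => insertAtG i xi rest j.1) = rest := by
  funext j
  rw [insertAtG, dif_neg j.2]

lemma insertAtG_restrict (i : ι) (x : ∀ j, X j) :
    insertAtG i (x i) (fun j => x j.1) = x := by
  funext j
  by_cases h : j = i
  · subst h
    exact insertAtG_apply_self j (x j) _
  · rw [insertAtG, dif_neg h]

/-- Splitting off one coordinate of a dependent product. -/
def splitEquiv (X : ι → Type) (i : ι) :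
    (∀ j, X j) ≃ X i × (∀ j : {j : ι // j ≠ i}, X j.1) where
  toFun x := (x i, fun j => x j.1)
  invFun p := insertAtG i p.1 p.2
  left_inv x := insertAtG_restrict i x
  right_inv p := by
    cases p with
    | mk xi rest =>
      refine Prod.ext ?_ ?_
      · exact insertAtG_apply_self i xi rest
      · exact restrict_insertAtG i xi rest

end InsertAt

section ChainBound
set_option linter.unusedSectionVars false
variable {m : Type} [Fintype m] [DecidableEq m]

lemma splitEquiv_symm_apply {ι : Type} [DecidableEq ι] (X : ι → Type) (i : ι)
    (p : X i × (∀ j : {j : ι // j ≠ i}, X j.1)) :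
    (splitEquiv X i).symm p = insertAtG i p.1 p.2 := rfl

/-- The key "chain rule" capacity bound: if every state of the `i₀`-derived channel with
mixing distributions `ν` carries Holevo information at least `c` in its rows, then the derived
channel capacity is at most `capacity E - c`. -/
lemma capacity_derived_le
    {ι : Type} [Fintype ι] [DecidableEq ι] {X : ι → Type}
    [∀ i, Fintype (X i)] [∀ i, DecidableEq (X i)] [∀ i, Nonempty (X i)]
    (E : (∀ i, X i) → Matrix m m ℂ) (hE : ∀ x, IsDensity (E x)) (i₀ : ι)
    (ν : X i₀ → FinDist (∀ j : {j : ι // j ≠ i₀}, X j.1)) (c : ℝ)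
    (hc : ∀ a, c ≤ mutualInfo (cqState (ν a).1 (fun r => E (insertAtG i₀ a r)))) :
    capacity (fun a => ∑ r, (ν a).1 r • E (insertAtG i₀ a r)) ≤ capacity E - c := by
  classical
  set F : X i₀ → Matrix m m ℂ := fun a => ∑ r, (ν a).1 r • E (insertAtG i₀ a r) with hF_def
  have hF : ∀ a, IsDensity (F a) := fun a => isDensity_mix (ν a) _ (fun r => hE _)
  apply capacity_le
  intro q
  -- the joint input distribution
  have hnn : ∀ x : (∀ j, X j), 0 ≤ q.1 (x i₀) * (ν (x i₀)).1 (fun j => x j.1) :=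
    fun x => mul_nonneg (q.2.1 _) ((ν _).2.1 _)
  have hsum1 : (∑ x : (∀ j, X j), q.1 (x i₀) * (ν (x i₀)).1 (fun j => x j.1)) = 1 := by
    rw [← Equiv.sum_comp (splitEquiv X i₀).symm, Fintype.sum_prod_type]
    simp only [splitEquiv_symm_apply, insertAtG_apply_self, restrict_insertAtG]
    have : ∀ a : X i₀, (∑ r, q.1 a * (ν a).1 r) = q.1 a := by
      intro a
      rw [← Finset.mul_sum, (ν a).2.2, mul_one]
    rw [Finset.sum_congr rfl fun a _ => this a]
    exact q.2.2
  set phat : FinDist (∀ j, X j) :=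
    ⟨fun x => q.1 (x i₀) * (ν (x i₀)).1 (fun j => x j.1), hnn, hsum1⟩ with hphat_def
  -- the averaged states agree
  have hσ : (∑ x, phat.1 x • E x) = ∑ a, q.1 a • F a := by
    rw [← Equiv.sum_comp (splitEquiv X i₀).symm, Fintype.sum_prod_type]
    simp only [hphat_def, splitEquiv_symm_apply, insertAtG_apply_self, restrict_insertAtG]
    refine Finset.sum_congr rfl fun a _ => ?_
    rw [hF_def, Finset.smul_sum]
    exact Finset.sum_congr rfl fun r _ => (smul_smul _ _ _).symm
  -- the average output entropies agree
  have hV : (∑ x, phat.1 x * vnEntropy (E x))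
      = ∑ a, q.1 a * ∑ r, (ν a).1 r * vnEntropy (E (insertAtG i₀ a r)) := by
    rw [← Equiv.sum_comp (splitEquiv X i₀).symm, Fintype.sum_prod_type]
    simp only [hphat_def, splitEquiv_symm_apply, insertAtG_apply_self, restrict_insertAtG]
    refine Finset.sum_congr rfl fun a _ => ?_
    rw [Finset.mul_sum]
    exact Finset.sum_congr rfl fun r _ => by ring
  -- exact chain rule identity
  have hkey : mutualInfo (cqState q.1 F) = mutualInfo (cqState phat.1 E)
      - ∑ a, q.1 a * mutualInfo (cqState (ν a).1 (fun r => E (insertAtG i₀ a r))) := by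
    rw [mutualInfo_cqState q F hF, mutualInfo_cqState phat E hE, hσ, hV]
    have hrow : ∀ a, mutualInfo (cqState (ν a).1 (fun r => E (insertAtG i₀ a r)))
        = vnEntropy (F a) - ∑ r, (ν a).1 r * vnEntropy (E (insertAtG i₀ a r)) := by
      intro a
      rw [mutualInfo_cqState (ν a) _ (fun r => hE _)]
    rw [Finset.sum_congr rfl fun a _ => congrArg (q.1 a * ·) (hrow a)]
    have expand : (∑ a, q.1 a * (vnEntropy (F a)
          - ∑ r, (ν a).1 r * vnEntropy (E (insertAtG i₀ a r))))
        = (∑ a, q.1 a * vnEntropy (F a))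
          - ∑ a, q.1 a * ∑ r, (ν a).1 r * vnEntropy (E (insertAtG i₀ a r)) := by
      rw [← Finset.sum_sub_distrib]
      exact Finset.sum_congr rfl fun a _ => mul_sub _ _ _
    rw [expand]
    ring
  have h1 : mutualInfo (cqState phat.1 E) ≤ capacity E := le_capacity E hE phat
  have h2 : c ≤ ∑ a, q.1 a * mutualInfo (cqState (ν a).1 (fun r => E (insertAtG i₀ a r))) := by
    have hc1 : c = ∑ a, q.1 a * c := by
      rw [← Finset.sum_mul, q.2.2, one_mul]
    rw [hc1]
    exact Finset.sum_le_sum fun a _ => mul_le_mul_of_nonneg_left (hc a) (q.2.1 a)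
  rw [hkey]
  linarith

end ChainBound

section Transport
set_option linter.unusedSectionVars false

/-- Transport an assignment of the coordinates other than `i₀, i'` into an assignment of all
coordinates other than `i'`, by plugging `a₀` into coordinate `i₀`. -/
def pushRest {ι : Type} [DecidableEq ι] {X : ι → Type} (i₀ : ι) (a₀ : X i₀)
    (i' : {j : ι // j ≠ i₀})
    (r' : ∀ j : {j : {j : ι // j ≠ i₀} // j ≠ i'}, X j.1.1) : ∀ j : {j : ι // j ≠ i'.1}, X j.1 :=
  fun j => if h0 : j.1 = i₀ then cast (congrArg X h0.symm) a₀
    else r' ⟨⟨j.1, h0⟩, fun hx => j.2 (congrArg Subtype.val hx)⟩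

lemma insert_key {ι : Type} [DecidableEq ι] {X : ι → Type} (i₀ : ι) (a₀ : X i₀)
    (i' : {j : ι // j ≠ i₀}) (xi : X i'.1)
    (r' : ∀ j : {j : {j : ι // j ≠ i₀} // j ≠ i'}, X j.1.1) :
    insertAtG i'.1 xi (pushRest i₀ a₀ i' r')
      = insertAtG i₀ a₀ (insertAtG (X := fun j : {j : ι // j ≠ i₀} => X j.1) i' xi r') := by
  funext j
  by_cases h1 : j = i'.1
  · subst h1
    rw [insertAtG_apply_self, insertAtG_apply_ne i₀ a₀ _ i'.2]
    exact (insertAtG_apply_self (X := fun j : {j : ι // j ≠ i₀} => X j.1) i' xi r').symm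
  · by_cases h0 : j = i₀
    · rw [insertAtG_apply_ne i'.1 xi _ h1]
      show (if hh : (⟨j, h1⟩ : {j : ι // j ≠ i'.1}).1 = i₀
          then cast (congrArg X hh.symm) a₀ else _) = _
      rw [dif_pos h0]
      rw [insertAtG, dif_pos h0]
    · rw [insertAtG_apply_ne i'.1 xi _ h1]
      show (if hh : (⟨j, h1⟩ : {j : ι // j ≠ i'.1}).1 = i₀
          then cast (congrArg X hh.symm) a₀ else _) = _
      rw [dif_neg h0, insertAtG_apply_ne i₀ a₀ _ h0,
        insertAtG_apply_ne (X := fun j : {j : ι // j ≠ i₀} => X j.1) i' xi r'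
          (j := ⟨j, h0⟩) (fun hx => h1 (congrArg Subtype.val hx))]

end Transport

section InfTransport
set_option linter.unusedSectionVars false

lemma inf_derived_le {m : Type} [Fintype m] [DecidableEq m]
    {ι : Type} [Fintype ι] [DecidableEq ι] {X : ι → Type}
    [∀ i, Fintype (X i)] [∀ i, DecidableEq (X i)] [∀ i, Nonempty (X i)]
    (E : (∀ j, X j) → Matrix m m ℂ) (hE : ∀ x, IsDensity (E x)) (i₀ : ι) (a₀ : X i₀)
    (i' : {j : ι // j ≠ i₀}) :
    (⨅ ν : X i'.1 → FinDist (∀ j : {j : ι // j ≠ i'.1}, X j.1),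
        capacity (fun xi => ∑ rest, (ν xi).1 rest • E (insertAtG i'.1 xi rest)))
    ≤ ⨅ ν' : X i'.1 → FinDist (∀ j : {j : {j : ι // j ≠ i₀} // j ≠ i'}, X j.1.1),
        capacity (fun xi => ∑ rest, (ν' xi).1 rest •
          E (insertAtG i₀ a₀
            (insertAtG (X := fun j : {j : ι // j ≠ i₀} => X j.1) i' xi rest))) := by
  classical
  have hbdd : BddBelow (Set.range fun ν : X i'.1 → FinDist (∀ j : {j : ι // j ≠ i'.1}, X j.1) =>
      capacity (fun xi => ∑ rest, (ν xi).1 rest • E (insertAtG i'.1 xi rest))) := by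
    refine ⟨0, ?_⟩
    rintro _ ⟨ν, rfl⟩
    exact capacity_nonneg _ (fun xi => isDensity_mix (ν xi) _ (fun r => hE _))
  refine le_ciInf fun ν' => ?_
  have hνsum : ∀ xi : X i'.1,
      (∑ rest, ∑ r', if rest = pushRest i₀ a₀ i' r' then (ν' xi).1 r' else 0) = 1 := by
    intro xi
    rw [Finset.sum_comm]
    calc ∑ r', ∑ rest, (if rest = pushRest i₀ a₀ i' r' then (ν' xi).1 r' else 0)
        = ∑ r', (ν' xi).1 r' := by
          refine Finset.sum_congr rfl fun r' _ => ?_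
          rw [Finset.sum_ite_eq' Finset.univ (pushRest i₀ a₀ i' r') (fun _ => (ν' xi).1 r')]
          exact if_pos (Finset.mem_univ _)
      _ = 1 := (ν' xi).2.2
  refine ciInf_le_of_le hbdd (fun xi =>
    ⟨fun rest => ∑ r', if rest = pushRest i₀ a₀ i' r' then (ν' xi).1 r' else 0,
     fun rest => Finset.sum_nonneg fun r' _ => by
       split_ifs
       · exact (ν' xi).2.1 r'
       · exact le_rfl,
     hνsum xi⟩) ?_
  refine le_of_eq (congrArg capacity ?_)
  funext xi
  rw [Finset.sum_congr rfl (fun rest _ => Finset.sum_smul)]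
  rw [Finset.sum_comm]
  refine Finset.sum_congr rfl fun r' _ => ?_
  have hite : ∀ rest, (if rest = pushRest i₀ a₀ i' r' then (ν' xi).1 r' else 0) •
        E (insertAtG i'.1 xi rest)
      = (if rest = pushRest i₀ a₀ i' r'
          then (ν' xi).1 r' • E (insertAtG i'.1 xi rest) else 0) := by
    intro rest
    split_ifs <;> simp
  rw [Finset.sum_congr rfl fun rest _ => hite rest]
  rw [Finset.sum_ite_eq' Finset.univ (pushRest i₀ a₀ i' r')
      (fun rest => (ν' xi).1 r' • E (insertAtG i'.1 xi rest))]
  rw [if_pos (Finset.mem_univ _), insert_key i₀ a₀ i' xi r']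

end InfTransport

section MainInduction
set_option linter.unusedSectionVars false
variable {m : Type} [Fintype m] [DecidableEq m]

lemma main_aux (n : ℕ) :
    ∀ (ι : Type) [Fintype ι] [DecidableEq ι]
      (X : ι → Type) [∀ i, Fintype (X i)] [∀ i, DecidableEq (X i)] [∀ i, Nonempty (X i)]
      (E : (∀ j, X j) → Matrix m m ℂ), (∀ x, IsDensity (E x)) →
      Fintype.card ι ≤ n →
      (∑ i : ι, ⨅ ν : X i → FinDist (∀ j : {j : ι // j ≠ i}, X j.1),
          capacity (fun xi => ∑ rest, (ν xi).1 rest • E (insertAtG i xi rest)))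
        ≤ capacity E := by
  induction n with
  | zero =>
    intro ι _ _ X _ _ _ E hE hcard
    haveI : Nonempty (∀ j, X j) := ⟨fun j => Classical.arbitrary _⟩
    haveI : IsEmpty ι := Fintype.card_eq_zero_iff.mp (Nat.le_zero.mp hcard)
    rw [Finset.univ_eq_empty, Finset.sum_empty]
    exact capacity_nonneg E hE
  | succ n IH =>
    intro ι _ _ X _ _ _ E hE hcard
    haveI : Nonempty (∀ j, X j) := ⟨fun j => Classical.arbitrary _⟩
    rcases isEmpty_or_nonempty ι with hι | hι
    · rw [Finset.univ_eq_empty, Finset.sum_empty]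
      exact capacity_nonneg E hE
    · obtain ⟨i₀⟩ := hι
      obtain ⟨a₀, -, ha₀⟩ := Finset.exists_min_image Finset.univ
        (fun a : X i₀ => capacity (fun r => E (insertAtG i₀ a r)))
        ⟨Classical.arbitrary (X i₀), Finset.mem_univ _⟩
      refine le_of_forall_pos_le_add ?_
      intro ε hε
      -- near-optimal inputs for the row channels
      have hchoice : ∀ a : X i₀, ∃ p : FinDist (∀ j : {j : ι // j ≠ i₀}, X j.1),
          capacity (fun r => E (insertAtG i₀ a r)) - ε
            < mutualInfo (cqState p.1 (fun r => E (insertAtG i₀ a r))) := by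
        intro a
        exact exists_lt_of_lt_ciSup (sub_lt_self _ hε)
      choose ν₀ hν₀ using hchoice
      -- bound for the i₀ term
      have hterm : (⨅ ν : X i₀ → FinDist (∀ j : {j : ι // j ≠ i₀}, X j.1),
            capacity (fun xi => ∑ rest, (ν xi).1 rest • E (insertAtG i₀ xi rest)))
          ≤ capacity E - (capacity (fun r => E (insertAtG i₀ a₀ r)) - ε) := by
        have hbdd : BddBelow (Set.range fun ν : X i₀ → FinDist (∀ j : {j : ι // j ≠ i₀}, X j.1) =>
            capacity (fun xi => ∑ rest, (ν xi).1 rest • E (insertAtG i₀ xi rest))) := by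
          refine ⟨0, ?_⟩
          rintro _ ⟨ν, rfl⟩
          exact capacity_nonneg _ (fun xi => isDensity_mix (ν xi) _ (fun r => hE _))
        refine ciInf_le_of_le hbdd ν₀ ?_
        refine capacity_derived_le E hE i₀ ν₀ _ ?_
        intro a
        have h1 := le_of_lt (hν₀ a)
        have h2 := ha₀ a (Finset.mem_univ a)
        linarith
      -- bound for the remaining terms via the induction hypothesis
      have hcard' : Fintype.card {j : ι // j ≠ i₀} ≤ n := by
        have h1 : Fintype.card {j : ι // j ≠ i₀} = Fintype.card ι - 1 := by
          rw [Fintype.card_subtype_compl, Fintype.card_subtype_eq]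
        omega
      have hIH := IH {j : ι // j ≠ i₀} (fun j => X j.1)
        (fun r => E (insertAtG i₀ a₀ r)) (fun r => hE _) hcard'
      have hrest : (∑ i ∈ Finset.univ.erase i₀,
            ⨅ ν : X i → FinDist (∀ j : {j : ι // j ≠ i}, X j.1),
              capacity (fun xi => ∑ rest, (ν xi).1 rest • E (insertAtG i xi rest)))
          ≤ capacity (fun r => E (insertAtG i₀ a₀ r)) := by
        calc (∑ i ∈ Finset.univ.erase i₀,
              ⨅ ν : X i → FinDist (∀ j : {j : ι // j ≠ i}, X j.1),
                capacity (fun xi => ∑ rest, (ν xi).1 rest • E (insertAtG i xi rest)))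
            = ∑ i' : {j : ι // j ≠ i₀},
              ⨅ ν : X i'.1 → FinDist (∀ j : {j : ι // j ≠ i'.1}, X j.1),
                capacity (fun xi => ∑ rest, (ν xi).1 rest • E (insertAtG i'.1 xi rest)) := by
              refine Finset.sum_subtype _ (fun x => ?_) _
              simp [Finset.mem_erase]
          _ ≤ ∑ i' : {j : ι // j ≠ i₀},
              ⨅ ν' : X i'.1 → FinDist (∀ j : {j : {j : ι // j ≠ i₀} // j ≠ i'}, X j.1.1),
                capacity (fun xi => ∑ rest, (ν' xi).1 rest •
                  E (insertAtG i₀ a₀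
                    (insertAtG (X := fun j : {j : ι // j ≠ i₀} => X j.1) i' xi rest))) :=
              Finset.sum_le_sum fun i' _ => inf_derived_le E hE i₀ a₀ i'
          _ ≤ capacity (fun r => E (insertAtG i₀ a₀ r)) := hIH
      have hsplit := Finset.add_sum_erase Finset.univ
        (fun i => ⨅ ν : X i → FinDist (∀ j : {j : ι // j ≠ i}, X j.1),
          capacity (fun xi => ∑ rest, (ν xi).1 rest • E (insertAtG i xi rest)))
        (Finset.mem_univ i₀)
      rw [← hsplit]
      linarith

end MainInduction

end Stmt5Aux

/-- superadditivity of channel capacity for a c-q channel on a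
`k`-fold product: `C(E) ≥ Σᵢ min_{Fᵢ} C(Fᵢ)` over `E`-derived channels on each `Xᵢ`. -/
theorem stmt5_capacity_superadditive
    {k : ℕ} {X : Fin k → Type} [∀ i, Fintype (X i)] [∀ i, DecidableEq (X i)]
    [∀ i, Nonempty (X i)]
    {m : Type} [Fintype m] [DecidableEq m]
    (E : (∀ i, X i) → Matrix m m ℂ) (hE : ∀ x, IsDensity (E x)) :
    (∑ i : Fin k,
      ⨅ ν : X i → FinDist (∀ j : {j : Fin k // j ≠ i}, X j.1),
        capacity (fun xi => ∑ rest, (ν xi).1 rest • E (insertAt i xi rest))) ≤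
      capacity E := by
  have h := Stmt5Aux.main_aux (m := m) (Fintype.card (Fin k)) (Fin k) X E hE le_rfl
  exact h

end
end

section
/- For any classical channel E : X → (distributions on a finite set Y), with X finite, there exists a probability distribution Q on Y such that for all x ∈ X, D(E(x) ‖ Q) ≤ C(E), where C(E) = max_μ I(X:Y) over input distributions μ and D is Kullback–Leibler divergence. -/
open Matrix BigOperators
open scoped Kronecker ComplexOrder

noncomputable section

/-- Capacity of a classical channel `E : X → (distributions on Y)`, via the
characterization `C(E) = max_μ E_{x←μ}[D(E(x) ‖ output distribution)]`. -/
def capacityC {X Y : Type} [Fintype X] [Fintype Y] (E : X → Y → ℝ) : ℝ :=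
  ⨆ μ : FinDist X, ∑ x, μ.1 x * klDiv (E x) (fun y => ∑ x', μ.1 x' * E x' y)


private lemma term_split (a b q : ℝ) (ha : 0 ≤ a) (hb : 0 ≤ b) (hq : a * b ≤ q) :
    a * (b * Real.logb 2 (b / q)) = a * (b * Real.logb 2 b) - a * b * Real.logb 2 q := by
  rcases ha.eq_or_lt with h | h
  · simp [← h]
  rcases hb.eq_or_lt with h' | h'
  · simp [← h']
  have hq0 : 0 < q := lt_of_lt_of_le (mul_pos h h') hq
  rw [Real.logb_div h'.ne' hq0.ne']
  ring

private lemma term_shift (a b q q' : ℝ) (ha : 0 ≤ a) (hb : 0 ≤ b)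
    (hq : a * b ≤ q) (hq' : 0 < q → 0 < q') :
    a * (b * Real.logb 2 (b / q')) - a * (b * Real.logb 2 (b / q))
      = a * b * Real.logb 2 (q / q') := by
  rcases ha.eq_or_lt with h | h
  · simp [← h]
  rcases hb.eq_or_lt with h' | h'
  · simp [← h']
  have hq0 : 0 < q := lt_of_lt_of_le (mul_pos h h') hq
  have hq'0 : 0 < q' := hq' hq0
  rw [Real.logb_div h'.ne' hq'0.ne', Real.logb_div h'.ne' hq0.ne',
    Real.logb_div hq0.ne' hq'0.ne']
  ring

private lemma gibbs' {Y : Type} [Fintype Y] (P Q : Y → ℝ)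
    (hP0 : ∀ y, 0 ≤ P y) (hQ0 : ∀ y, 0 ≤ Q y)
    (hsum : ∑ y, Q y ≤ ∑ y, P y)
    (hsupp : ∀ y, 0 < P y → 0 < Q y) :
    0 ≤ ∑ y, P y * Real.logb 2 (P y / Q y) := by
  have h2 : (0:ℝ) < Real.log 2 := Real.log_pos one_lt_two
  have key : ∀ y ∈ Finset.univ, (P y - Q y) / Real.log 2 ≤ P y * Real.logb 2 (P y / Q y) := by
    intro y _
    rcases (hP0 y).eq_or_lt with h | h
    · rw [← h, zero_mul]
      apply div_nonpos_of_nonpos_of_nonneg (by linarith [hQ0 y]) h2.le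
    · have hQ := hsupp y h
      have h1 : Real.log (Q y / P y) ≤ Q y / P y - 1 :=
        Real.log_le_sub_one_of_pos (div_pos hQ h)
      rw [Real.log_div hQ.ne' h.ne'] at h1
      have h4 : P y - Q y ≤ P y * (Real.log (P y) - Real.log (Q y)) := by
        have h5 := mul_le_mul_of_nonneg_left h1 h.le
        have h6 : P y * (Q y / P y) = Q y := by field_simp
        nlinarith [h5, h6]
      have h7 : Real.logb 2 (P y / Q y) = (Real.log (P y) - Real.log (Q y)) / Real.log 2 := by
        rw [Real.logb, Real.log_div h.ne' hQ.ne']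
      rw [h7, ← mul_div_assoc]
      gcongr
  calc (0:ℝ) = (∑ y, P y - ∑ y, Q y) / Real.log 2 - (∑ y, P y - ∑ y, Q y) / Real.log 2 := by ring
    _ ≤ ∑ y, P y * Real.logb 2 (P y / Q y) := by
        have := Finset.sum_le_sum key
        rw [← Finset.sum_div, Finset.sum_sub_distrib] at this
        have h8 : 0 ≤ (∑ y, P y - ∑ y, Q y) / Real.log 2 := div_nonneg (by linarith) h2.le
        linarith

private lemma kl_identity {X Y : Type} [Fintype X] [Fintype Y] (E : X → Y → ℝ)
    (hE0 : ∀ x y, 0 ≤ E x y) (p : X → ℝ) (hp0 : ∀ x, 0 ≤ p x) :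
    ∑ x, p x * klDiv (E x) (fun y => ∑ x', p x' * E x' y)
      = ∑ x, p x * (∑ y, E x y * Real.logb 2 (E x y))
        - ∑ y, (∑ x, p x * E x y) * Real.logb 2 (∑ x, p x * E x y) := by
  have step1 : ∀ x, p x * klDiv (E x) (fun y => ∑ x', p x' * E x' y)
      = ∑ y, (p x * (E x y * Real.logb 2 (E x y))
          - (p x * E x y) * Real.logb 2 (∑ x', p x' * E x' y)) := by
    intro x
    rw [klDiv, Finset.mul_sum]
    refine Finset.sum_congr rfl fun y _ => ?_
    have hle : p x * E x y ≤ ∑ x', p x' * E x' y :=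
      Finset.single_le_sum (f := fun x' => p x' * E x' y)
        (fun x' _ => mul_nonneg (hp0 x') (hE0 x' y)) (Finset.mem_univ x)
    exact term_split (p x) (E x y) _ (hp0 x) (hE0 x y) hle
  rw [Finset.sum_congr rfl fun x _ => step1 x]
  simp_rw [Finset.sum_sub_distrib]
  congr 1
  · exact Finset.sum_congr rfl fun x _ => (Finset.mul_sum _ _ _).symm
  · rw [Finset.sum_comm]
    exact Finset.sum_congr rfl fun y _ => (Finset.sum_mul _ _ _).symm

/-- for any classical channel `E` there exists an output distribution
`Q` with `D(E(x) ‖ Q) ≤ C(E)` for all `x`. -/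
theorem stmt7_exists_good_output_distribution
    {X Y : Type} [Fintype X] [Fintype Y] [Nonempty X] [Nonempty Y]
    (E : X → Y → ℝ) (hE0 : ∀ x y, 0 ≤ E x y) (hE1 : ∀ x, ∑ y, E x y = 1) :
    ∃ Q : Y → ℝ, (∀ y, 0 ≤ Q y) ∧ (∑ y, Q y = 1) ∧
      ∀ x, klDiv (E x) Q ≤ capacityC E := by
  classical
  set F : (X → ℝ) → ℝ := fun p =>
    ∑ x, p x * (∑ y, E x y * Real.logb 2 (E x y))
      - ∑ y, (∑ x, p x * E x y) * Real.logb 2 (∑ x, p x * E x y) with hF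
  have hFcont : Continuous F := by
    apply Continuous.sub
    · exact continuous_finset_sum _ fun x _ => (continuous_apply x).mul continuous_const
    · apply continuous_finset_sum
      intro y _
      have h1 : Continuous fun p : X → ℝ => ∑ x, p x * E x y :=
        continuous_finset_sum _ fun x _ => (continuous_apply x).mul continuous_const
      have h2 : (fun p : X → ℝ => (∑ x, p x * E x y) * Real.logb 2 (∑ x, p x * E x y))
          = fun p : X → ℝ => -Real.negMulLog (∑ x, p x * E x y) / Real.log 2 := by
        funext p
        rw [Real.negMulLog, Real.logb]
        ring
      rw [h2]
      exact ((Real.continuous_negMulLog.comp h1).neg).div_const _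
  obtain ⟨μ0⟩ := (inferInstance : Nonempty (FinDist X))
  have hSne : (stdSimplex ℝ X).Nonempty := ⟨μ0.1, μ0.2.1, μ0.2.2⟩
  obtain ⟨p, hpS, hpmax⟩ := (isCompact_stdSimplex ℝ X).exists_isMaxOn hSne hFcont.continuousOn
  have hp0 : ∀ x, 0 ≤ p x := hpS.1
  have hp1 : ∑ x, p x = 1 := hpS.2
  set Qs : Y → ℝ := fun y => ∑ x, p x * E x y with hQs
  have hQs0 : ∀ y, 0 ≤ Qs y := fun y =>
    Finset.sum_nonneg fun x _ => mul_nonneg (hp0 x) (hE0 x y)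
  have hQs1 : ∑ y, Qs y = 1 := by
    simp only [hQs]
    rw [Finset.sum_comm]
    simp_rw [← Finset.mul_sum, hE1, mul_one]
    exact hp1
  have hidF : ∀ q : X → ℝ, (∀ x, 0 ≤ q x) →
      ∑ x, q x * klDiv (E x) (fun y => ∑ x', q x' * E x' y) = F q :=
    fun q hq => kl_identity E hE0 q hq
  have hmaxF : ∀ q : X → ℝ, q ∈ stdSimplex ℝ X → F q ≤ F p := fun q hq => hpmax hq
  have hCle : capacityC E ≤ F p := by
    unfold capacityC
    apply ciSup_le
    intro μ
    exact le_trans (le_of_eq (hidF μ.1 μ.2.1)) (hmaxF μ.1 ⟨μ.2.1, μ.2.2⟩)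
  have hbdd : BddAbove (Set.range fun μ : FinDist X =>
      ∑ x, μ.1 x * klDiv (E x) fun y => ∑ x', μ.1 x' * E x' y) := by
    refine ⟨F p, ?_⟩
    rintro _ ⟨μ, rfl⟩
    exact le_trans (le_of_eq (hidF μ.1 μ.2.1)) (hmaxF μ.1 ⟨μ.2.1, μ.2.2⟩)
  have hCge : F p ≤ capacityC E := by
    have h := le_ciSup hbdd (⟨p, hp0, hp1⟩ : FinDist X)
    rw [hidF p hp0] at h
    exact h
  have hCeq : F p = capacityC E := le_antisymm hCge hCle
  have hFp : ∑ x, p x * klDiv (E x) Qs = F p := hidF p hp0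
  -- key bound: for all x0 and t ∈ (0,1), klDiv (E x0) Qt ≤ capacityC E
  have key : ∀ x0 : X, ∀ t ∈ Set.Ioo (0:ℝ) 1,
      klDiv (E x0) (fun y => (1-t) * Qs y + t * E x0 y) ≤ capacityC E := by
    intro x0 t ht
    obtain ⟨ht0, ht1⟩ := ht
    set pt : X → ℝ := fun x => (1-t) * p x + t * (if x = x0 then 1 else 0) with hptdef
    set Qt : Y → ℝ := fun y => (1-t) * Qs y + t * E x0 y with hQtdef
    have hpt0 : ∀ x, 0 ≤ pt x := by
      intro x
      simp only [hptdef]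
      have h0 : (0:ℝ) ≤ (if x = x0 then (1:ℝ) else 0) := by split_ifs <;> norm_num
      exact add_nonneg (mul_nonneg (by linarith) (hp0 x)) (mul_nonneg ht0.le h0)
    have hpt1 : ∑ x, pt x = 1 := by
      simp only [hptdef]
      rw [Finset.sum_add_distrib, ← Finset.mul_sum, ← Finset.mul_sum, hp1,
        Finset.sum_ite_eq' Finset.univ x0 (fun _ => (1:ℝ))]
      simp
    have hQt : (fun y => ∑ x', pt x' * E x' y) = Qt := by
      funext y
      simp only [hQtdef, hQs]
      have hterm : ∀ x, pt x * E x y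
          = (1-t) * (p x * E x y) + t * (if x = x0 then E x y else 0) := by
        intro x
        simp only [hptdef]
        split_ifs <;> ring
      rw [Finset.sum_congr rfl fun x _ => hterm x, Finset.sum_add_distrib,
        ← Finset.mul_sum, ← Finset.mul_sum, Finset.sum_ite_eq' Finset.univ x0 (fun x => E x y)]
      simp
    have hQt0 : ∀ y, 0 ≤ Qt y := by
      intro y
      simp only [hQtdef]
      have h1t : (0:ℝ) ≤ 1 - t := by linarith
      have := hQs0 y
      have := hE0 x0 y
      positivity
    have hQtpos : ∀ y, 0 < Qs y → 0 < Qt y := by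
      intro y hy
      simp only [hQtdef]
      have : 0 < (1-t) * Qs y := mul_pos (by linarith) hy
      have := mul_nonneg ht0.le (hE0 x0 y)
      linarith
    have hQt1 : ∑ y, Qt y = 1 := by
      simp only [hQtdef]
      rw [Finset.sum_add_distrib, ← Finset.mul_sum, ← Finset.mul_sum, hQs1, hE1]
      ring
    -- step B
    have stepB : ∑ x, p x * klDiv (E x) Qs ≤ ∑ x, p x * klDiv (E x) Qt := by
      have hdiff : ∑ x, p x * klDiv (E x) Qt - ∑ x, p x * klDiv (E x) Qs
          = ∑ y, Qs y * Real.logb 2 (Qs y / Qt y) := by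
        rw [← Finset.sum_sub_distrib]
        have hx : ∀ x, p x * klDiv (E x) Qt - p x * klDiv (E x) Qs
            = ∑ y, (p x * E x y) * Real.logb 2 (Qs y / Qt y) := by
          intro x
          rw [klDiv, klDiv, Finset.mul_sum, Finset.mul_sum, ← Finset.sum_sub_distrib]
          refine Finset.sum_congr rfl fun y _ => ?_
          have hle : p x * E x y ≤ Qs y := by
            simp only [hQs]
            exact Finset.single_le_sum (f := fun x' => p x' * E x' y)
              (fun x' _ => mul_nonneg (hp0 x') (hE0 x' y)) (Finset.mem_univ x)
          exact term_shift (p x) (E x y) (Qs y) (Qt y) (hp0 x) (hE0 x y) hle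
            (fun h => hQtpos y h)
        rw [Finset.sum_congr rfl fun x _ => hx x, Finset.sum_comm]
        refine Finset.sum_congr rfl fun y _ => ?_
        rw [← Finset.sum_mul]
      have hg : 0 ≤ ∑ y, Qs y * Real.logb 2 (Qs y / Qt y) :=
        gibbs' Qs Qt hQs0 hQt0 (by rw [hQt1, hQs1]) hQtpos
      linarith
    have hfpt : ∑ x, pt x * klDiv (E x) Qt = F pt := by
      rw [← hQt]
      exact hidF pt hpt0
    have hFle : F pt ≤ F p := hmaxF pt ⟨hpt0, hpt1⟩
    have hdec : ∑ x, pt x * klDiv (E x) Qt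
        = (1-t) * ∑ x, p x * klDiv (E x) Qt + t * klDiv (E x0) Qt := by
      have hterm : ∀ x, pt x * klDiv (E x) Qt
          = (1-t) * (p x * klDiv (E x) Qt)
            + t * (if x = x0 then klDiv (E x) Qt else 0) := by
        intro x
        simp only [hptdef]
        split_ifs <;> ring
      rw [Finset.sum_congr rfl fun x _ => hterm x, Finset.sum_add_distrib,
        ← Finset.mul_sum, ← Finset.mul_sum,
        Finset.sum_ite_eq' Finset.univ x0 (fun x => klDiv (E x) Qt)]
      simp
    have hcomb : (1-t) * F p + t * klDiv (E x0) Qt ≤ F p := by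
      calc (1-t) * F p + t * klDiv (E x0) Qt
          ≤ (1-t) * ∑ x, p x * klDiv (E x) Qt + t * klDiv (E x0) Qt := by
            have h1 : F p ≤ ∑ x, p x * klDiv (E x) Qt := by rw [← hFp]; exact stepB
            nlinarith [h1, ht1]
        _ = ∑ x, pt x * klDiv (E x) Qt := hdec.symm
        _ = F pt := hfpt
        _ ≤ F p := hFle
    have hkl : t * klDiv (E x0) Qt ≤ t * F p := by linarith
    have hfin := le_of_mul_le_mul_left hkl ht0
    rw [hQtdef] at hfin
    exact hfin.trans_eq hCeq
  -- conclude by taking t → 0+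
  refine ⟨Qs, hQs0, hQs1, ?_⟩
  intro x0
  set s : Finset Y := Finset.univ.filter (fun y => 0 < Qs y) with hsdef
  have hklQs : klDiv (E x0) Qs = ∑ y ∈ s, E x0 y * Real.logb 2 (E x0 y / Qs y) := by
    rw [klDiv, ← Finset.sum_filter_add_sum_filter_not Finset.univ (fun y => 0 < Qs y)
      (fun y => E x0 y * Real.logb 2 (E x0 y / Qs y))]
    have hz : ∑ y ∈ Finset.univ.filter (fun y => ¬ 0 < Qs y),
        E x0 y * Real.logb 2 (E x0 y / Qs y) = 0 := by
      apply Finset.sum_eq_zero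
      intro y hy
      have : Qs y = 0 := le_antisymm (not_lt.mp (Finset.mem_filter.mp hy).2) (hQs0 y)
      rw [this, div_zero, Real.logb_zero, mul_zero]
    rw [hz, add_zero, hsdef]
  set g : ℝ → ℝ := fun t =>
    ∑ y ∈ s, E x0 y * Real.logb 2 (E x0 y / ((1-t) * Qs y + t * E x0 y)) with hgdef
  have hgt : Filter.Tendsto g (nhdsWithin 0 (Set.Ioi 0)) (nhds (klDiv (E x0) Qs)) := by
    rw [hklQs, hgdef]
    apply tendsto_finset_sum
    intro y hy
    have hQsy : 0 < Qs y := (Finset.mem_filter.mp ((hsdef ▸ hy : y ∈ Finset.univ.filter _))).2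
    rcases (hE0 x0 y).eq_or_lt with h | h
    · simp only [← h, zero_mul, zero_div]
      exact tendsto_const_nhds
    · have hd : ContinuousAt (fun t : ℝ => (1-t) * Qs y + t * E x0 y) 0 := by fun_prop
      have hd0 : (1-(0:ℝ)) * Qs y + 0 * E x0 y = Qs y := by ring
      have hinner : ContinuousAt (fun t : ℝ => E x0 y / ((1-t) * Qs y + t * E x0 y)) 0 := by
        apply ContinuousAt.div continuousAt_const hd
        rw [hd0]
        exact hQsy.ne'
      have h5 : E x0 y / ((1-(0:ℝ)) * Qs y + 0 * E x0 y) ≠ 0 := by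
        rw [hd0]
        exact (div_pos h hQsy).ne'
      have hpoint : E x0 y * Real.logb 2 (E x0 y / Qs y)
          = E x0 y * Real.logb 2 (E x0 y / ((1-(0:ℝ)) * Qs y + 0 * E x0 y)) := by
        rw [hd0]
      rw [hpoint]
      exact (((Real.continuousAt_logb h5).tendsto.comp hinner.tendsto).const_mul
        (E x0 y)).mono_left nhdsWithin_le_nhds
  have hev : ∀ᶠ t in nhdsWithin 0 (Set.Ioi 0), g t ≤ capacityC E := by
    filter_upwards [Ioo_mem_nhdsGT_of_mem
      (Set.mem_Ico.mpr ⟨le_refl (0:ℝ), by norm_num⟩ : (0:ℝ) ∈ Set.Ico 0 1)] with t ht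
    have h1 : g t ≤ klDiv (E x0) (fun y => (1-t) * Qs y + t * E x0 y) := by
      rw [klDiv, ← Finset.sum_filter_add_sum_filter_not Finset.univ (fun y => 0 < Qs y)
        (fun y => E x0 y * Real.logb 2 (E x0 y / ((1-t) * Qs y + t * E x0 y)))]
      have h2 : 0 ≤ ∑ y ∈ Finset.univ.filter (fun y => ¬ 0 < Qs y),
          E x0 y * Real.logb 2 (E x0 y / ((1-t) * Qs y + t * E x0 y)) := by
        apply Finset.sum_nonneg
        intro y hy
        have hq0 : Qs y = 0 := le_antisymm (not_lt.mp (Finset.mem_filter.mp hy).2) (hQs0 y)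
        rcases (hE0 x0 y).eq_or_lt with h | h
        · rw [← h]
          simp
        · have hden : (1-t) * Qs y + t * E x0 y = t * E x0 y := by rw [hq0]; ring
          rw [hden]
          apply mul_nonneg (hE0 x0 y)
          apply Real.logb_nonneg one_lt_two
          have hdiv : E x0 y / (t * E x0 y) = 1 / t := by
            rw [mul_comm, ← div_div, div_self h.ne']
          rw [hdiv, le_div_iff₀ ht.1, one_mul]
          exact ht.2.le
      have h3 : g t = ∑ y ∈ Finset.univ.filter (fun y => 0 < Qs y),
          E x0 y * Real.logb 2 (E x0 y / ((1-t) * Qs y + t * E x0 y)) := by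
        rw [hgdef, hsdef]
      linarith
    exact h1.trans (key x0 t ht)
  exact le_of_tendsto hgt hev


end
end

section
/- For density matrices ρ, σ, the trace distance is bounded by relative entropy: ‖ρ − σ‖₁ ≤ √2 · S(ρ‖σ)^{1/2}. -/
open Matrix BigOperators
open scoped Kronecker ComplexOrder

noncomputable section

section AuxPinsker

/-! ### Auxiliary lemmas for the quantum Pinsker inequality -/

private def gG (t : ℝ) : ℝ := (t+1)*(t*Real.log t - t + 1) - Real.log 2 * (t-1)^2
private def gG1 (t : ℝ) : ℝ := (2*t+1)*Real.log t - (1 + 2*Real.log 2)*(t-1)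
private def gG2 (t : ℝ) : ℝ := 2*Real.log t + 1/t + 1 - 2*Real.log 2

private lemma hasDerivAt_gG {t : ℝ} (ht : 0 < t) : HasDerivAt gG (gG1 t) t := by
  have h1 : HasDerivAt (fun x : ℝ => x * Real.log x) (Real.log t + 1) t :=
    Real.hasDerivAt_mul_log ht.ne'
  have h2 : HasDerivAt (fun x : ℝ => x * Real.log x - x + 1) (Real.log t + 1 - 1) t :=
    (h1.sub (hasDerivAt_id t)).add_const 1
  have h3 : HasDerivAt (fun x : ℝ => x + 1) 1 t := (hasDerivAt_id t).add_const 1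
  have h4 := h3.fun_mul h2
  have h5 : HasDerivAt (fun x : ℝ => Real.log 2 * (x-1)^2) (Real.log 2 * (2*(t-1))) t := by
    have : HasDerivAt (fun x : ℝ => (x-1)^2) (2*(t-1)) t := by
      have := ((hasDerivAt_id t).sub_const 1).fun_pow 2
      simpa using this
    exact this.const_mul _
  have := h4.sub h5
  refine this.congr_deriv ?_
  unfold gG1
  ring

private lemma hasDerivAt_gG1 {t : ℝ} (ht : 0 < t) : HasDerivAt gG1 (gG2 t) t := by
  have h1 : HasDerivAt (fun x : ℝ => (2*x+1)*Real.log x)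
      (2*Real.log t + (2*t+1)*t⁻¹) t := by
    have ha : HasDerivAt (fun x : ℝ => 2*x+1) 2 t := by
      simpa using ((hasDerivAt_id t).const_mul 2).add_const 1
    have hb : HasDerivAt Real.log t⁻¹ t := Real.hasDerivAt_log ht.ne'
    simpa using ha.fun_mul hb
  have h2 : HasDerivAt (fun x : ℝ => (1 + 2*Real.log 2)*(x-1))
      (1 + 2*Real.log 2) t := by
    simpa using (((hasDerivAt_id t).sub_const 1)).const_mul (1 + 2*Real.log 2)
  have := h1.sub h2
  refine this.congr_deriv ?_
  unfold gG2
  field_simp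
  ring

private lemma gG2_nonneg {t : ℝ} (ht : 0 < t) : 0 ≤ gG2 t := by
  have hz : (0:ℝ) < 2*t := by linarith
  have h1 : Real.log (2*t)⁻¹ ≤ (2*t)⁻¹ - 1 :=
    Real.log_le_sub_one_of_pos (by positivity)
  rw [Real.log_inv] at h1
  have hlog : Real.log (2*t) = Real.log 2 + Real.log t := by
    rw [Real.log_mul (by norm_num) ht.ne']
  have hln2 : Real.log 2 < 0.6931471808 := Real.log_two_lt_d9
  have h2 : 1 - (2*t)⁻¹ ≤ Real.log 2 + Real.log t := by
    rw [← hlog]; linarith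
  have h3 : (2*t)⁻¹ = (1/t)/2 := by field_simp
  unfold gG2
  nlinarith [h2, hln2, (by positivity : (0:ℝ) < 1/t)]

private lemma gG1_mono : MonotoneOn gG1 (Set.Ioi 0) := by
  have hint : interior (Set.Ioi (0:ℝ)) = Set.Ioi 0 := interior_Ioi
  apply monotoneOn_of_deriv_nonneg (convex_Ioi 0)
  · intro x hx
    exact (hasDerivAt_gG1 hx).continuousAt.continuousWithinAt
  · rw [hint]
    intro x hx
    exact (hasDerivAt_gG1 hx).differentiableAt.differentiableWithinAt
  · rw [hint]
    intro x hx
    rw [(hasDerivAt_gG1 hx).deriv]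
    exact gG2_nonneg hx

private lemma gG1_one : gG1 1 = 0 := by simp [gG1]

private lemma gG_one : gG 1 = 0 := by simp [gG]

private lemma gG_nonneg {t : ℝ} (ht : 0 < t) : 0 ≤ gG t := by
  rcases le_or_gt 1 t with h1 | h1
  · have mono : MonotoneOn gG (Set.Ici 1) := by
      apply monotoneOn_of_deriv_nonneg (convex_Ici 1)
      · intro x hx
        exact (hasDerivAt_gG (lt_of_lt_of_le one_pos hx)).continuousAt.continuousWithinAt
      · rw [interior_Ici]
        intro x hx
        exact (hasDerivAt_gG (lt_trans one_pos hx)).differentiableAt.differentiableWithinAt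
      · rw [interior_Ici]
        intro x hx
        rw [(hasDerivAt_gG (lt_trans one_pos hx)).deriv]
        have := gG1_mono (Set.mem_Ioi.2 one_pos) (Set.mem_Ioi.2 (lt_trans one_pos hx)) hx.le
        rw [gG1_one] at this
        exact this
    have := mono (Set.mem_Ici.2 le_rfl) (Set.mem_Ici.2 h1) h1
    rwa [gG_one] at this
  · have anti : AntitoneOn gG (Set.Ioc 0 1) := by
      apply antitoneOn_of_deriv_nonpos (convex_Ioc 0 1)
      · intro x hx
        exact (hasDerivAt_gG hx.1).continuousAt.continuousWithinAt
      · rw [interior_Ioc]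
        intro x hx
        exact (hasDerivAt_gG hx.1).differentiableAt.differentiableWithinAt
      · rw [interior_Ioc]
        intro x hx
        rw [(hasDerivAt_gG hx.1).deriv]
        have := gG1_mono (Set.mem_Ioi.2 hx.1) (Set.mem_Ioi.2 one_pos) hx.2.le
        rw [gG1_one] at this
        exact this
    have := anti (Set.mem_Ioc.2 ⟨ht, h1.le⟩) (Set.mem_Ioc.2 ⟨one_pos, le_rfl⟩) h1.le
    rwa [gG_one] at this

private lemma scalar_key {x y : ℝ} (hx : 0 ≤ x) (hy : 0 < y) :
    Real.log 2 * ((x - y)^2 / (x + y)) ≤ x * (Real.log x - Real.log y) - x + y := by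
  rcases eq_or_lt_of_le hx with h0 | hx
  · rw [← h0]
    have hln2 : Real.log 2 < 0.6931471808 := Real.log_two_lt_d9
    have h1 : ((0:ℝ) - y)^2 / (0 + y) = y := by field_simp; ring
    rw [h1]
    simp only [zero_mul, zero_sub, neg_zero, zero_add]
    nlinarith
  · have ht : 0 < x / y := div_pos hx hy
    have hkey := gG_nonneg ht
    have hlog : Real.log (x/y) = Real.log x - Real.log y := Real.log_div hx.ne' hy.ne'
    unfold gG at hkey
    rw [hlog] at hkey
    have hxy : 0 < x + y := by linarith
    rw [mul_div_assoc', div_le_iff₀ hxy]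
    have expand : ((x/y + 1) * (x/y * (Real.log x - Real.log y) - x/y + 1)
        - Real.log 2 * (x/y - 1)^2) * y^2 =
        (x*(Real.log x - Real.log y) - x + y) * (x+y) - Real.log 2 * (x-y)^2 := by
      field_simp
    nlinarith [hkey, sq_nonneg y, mul_pos hy hy]

variable {n' : Type*} [Fintype n'] [DecidableEq n']

private lemma trace_DWGW (W : Matrix n' n' ℂ) (f g : n' → ℝ) :
    (Matrix.diagonal (fun i => (f i : ℂ)) * W * Matrix.diagonal (fun j => (g j : ℂ)) * Wᴴ).trace
    = ∑ i, ∑ j, ((f i * g j * Complex.normSq (W i j) : ℝ) : ℂ) := by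
  have hentry : ∀ i j, (Matrix.diagonal (fun i => (f i : ℂ)) * W
      * Matrix.diagonal (fun j => (g j : ℂ))) i j = (f i : ℂ) * W i j * (g j : ℂ) := by
    intro i j
    rw [Matrix.mul_diagonal, Matrix.diagonal_mul]
  rw [Matrix.trace]
  congr 1
  ext i
  rw [Matrix.diag_apply, Matrix.mul_apply]
  congr 1
  ext j
  rw [hentry, Matrix.conjTranspose_apply]
  have h2 : W i j * star (W i j) = (Complex.normSq (W i j) : ℂ) := Complex.mul_conj _
  rw [mul_assoc, mul_comm ((g j : ℂ)) (star (W i j)), ← mul_assoc, mul_assoc _ (W i j), h2]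
  push_cast
  ring

private lemma trace_conj_pair (U V : Matrix n' n' ℂ) (f g : n' → ℝ) :
    ((U * Matrix.diagonal (fun i => (f i : ℂ)) * Uᴴ)
      * (V * Matrix.diagonal (fun j => (g j : ℂ)) * Vᴴ)).trace
    = ∑ i, ∑ j, ((f i * g j * Complex.normSq ((Uᴴ * V) i j) : ℝ) : ℂ) := by
  have h1 : (U * Matrix.diagonal (fun i => (f i : ℂ)) * Uᴴ)
      * (V * Matrix.diagonal (fun j => (g j : ℂ)) * Vᴴ)
      = U * (Matrix.diagonal (fun i => (f i : ℂ)) * (Uᴴ * V)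
        * Matrix.diagonal (fun j => (g j : ℂ)) * Vᴴ) := by
    simp only [Matrix.mul_assoc]
  rw [h1, Matrix.trace_mul_comm]
  have h2 : Matrix.diagonal (fun i => (f i : ℂ)) * (Uᴴ * V)
        * Matrix.diagonal (fun j => (g j : ℂ)) * Vᴴ * U
      = Matrix.diagonal (fun i => (f i : ℂ)) * (Uᴴ * V)
        * Matrix.diagonal (fun j => (g j : ℂ)) * (Uᴴ * V)ᴴ := by
    rw [Matrix.conjTranspose_mul, Matrix.conjTranspose_conjTranspose, Matrix.mul_assoc]
  rw [h2, trace_DWGW]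

private lemma trace_mul_sand (K U : Matrix n' n' ℂ) (f : n' → ℝ) :
    (K * (U * Matrix.diagonal (fun i => (f i : ℂ)) * Uᴴ)).trace
    = ∑ i, (f i : ℂ) * (Uᴴ * K * U) i i := by
  have h1 : K * (U * Matrix.diagonal (fun i => (f i : ℂ)) * Uᴴ)
      = (K * U) * (Matrix.diagonal (fun i => (f i : ℂ)) * Uᴴ) := by
    simp only [Matrix.mul_assoc]
  rw [h1, Matrix.trace_mul_comm]
  have h2 : Matrix.diagonal (fun i => (f i : ℂ)) * Uᴴ * (K * U)
      = Matrix.diagonal (fun i => (f i : ℂ)) * (Uᴴ * K * U) := by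
    simp only [Matrix.mul_assoc]
  rw [h2, Matrix.trace]
  congr 1
  ext i
  rw [Matrix.diag_apply, Matrix.diagonal_mul]

private lemma collapse_sum (F : n' → n' → ℝ) :
    ∑ i, ∑ j, F i j * Complex.normSq ((1 : Matrix n' n' ℂ) i j) = ∑ i, F i i := by
  have h : ∀ i j, F i j * Complex.normSq ((1 : Matrix n' n' ℂ) i j)
      = if j = i then F i i else 0 := by
    intro i j
    by_cases hij : j = i
    · subst hij; simp [Matrix.one_apply]
    · simp [Matrix.one_apply, Ne.symm hij, hij]
  calc ∑ i, ∑ j, F i j * Complex.normSq ((1 : Matrix n' n' ℂ) i j)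
      = ∑ i, ∑ j, if j = i then F i i else 0 :=
        Finset.sum_congr rfl fun i _ => Finset.sum_congr rfl fun j _ => h i j
    _ = ∑ i, F i i := by
        refine Finset.sum_congr rfl fun i _ => ?_
        rw [Finset.sum_ite_eq' Finset.univ i (fun _ => F i i)]
        simp

private lemma re_double_sum (F : n' → n' → ℝ) :
    ((∑ i, ∑ j, ((F i j : ℝ) : ℂ)).re) = ∑ i, ∑ j, F i j := by
  rw [Complex.re_sum]
  refine Finset.sum_congr rfl fun i _ => ?_
  rw [Complex.re_sum]
  simp

end AuxPinsker

/-- quantum Pinsker inequality `‖ρ − σ‖₁ ≤ √2 · S(ρ‖σ)^{1/2}`. -/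
theorem stmt9_quantum_pinsker
    {m : Type} [Fintype m] [DecidableEq m]
    (ρ σ : Matrix m m ℂ) (hρ : IsDensity ρ) (hσ : σ.PosDef) (hσt : σ.trace = 1) :
    traceNorm (ρ - σ) ≤ Real.sqrt 2 * Real.sqrt (relEntropy ρ σ) := by
  obtain ⟨hρPSD, hρtr⟩ := hρ
  have hρH : ρ.IsHermitian := hρPSD.1
  have hσH : σ.IsHermitian := hσ.1
  have hΔ : (ρ - σ).IsHermitian := hρH.sub hσH
  set U : Matrix m m ℂ := (hρH.eigenvectorUnitary : Matrix m m ℂ) with hUdef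
  set V : Matrix m m ℂ := (hσH.eigenvectorUnitary : Matrix m m ℂ) with hVdef
  set E : Matrix m m ℂ := (hΔ.eigenvectorUnitary : Matrix m m ℂ) with hEdef
  set P : m → ℝ := hρH.eigenvalues with hPdef
  set Q : m → ℝ := hσH.eigenvalues with hQdef
  set D : m → ℝ := hΔ.eigenvalues with hDdef
  have hUU : Uᴴ * U = 1 := by
    rw [hUdef, ← Matrix.star_eq_conjTranspose]
    exact Matrix.mem_unitaryGroup_iff'.mp hρH.eigenvectorUnitary.2
  have hUU' : U * Uᴴ = 1 := by
    rw [hUdef, ← Matrix.star_eq_conjTranspose]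
    exact Matrix.mem_unitaryGroup_iff.mp hρH.eigenvectorUnitary.2
  have hVV : Vᴴ * V = 1 := by
    rw [hVdef, ← Matrix.star_eq_conjTranspose]
    exact Matrix.mem_unitaryGroup_iff'.mp hσH.eigenvectorUnitary.2
  have hVV' : V * Vᴴ = 1 := by
    rw [hVdef, ← Matrix.star_eq_conjTranspose]
    exact Matrix.mem_unitaryGroup_iff.mp hσH.eigenvectorUnitary.2
  have hEE : Eᴴ * E = 1 := by
    rw [hEdef, ← Matrix.star_eq_conjTranspose]
    exact Matrix.mem_unitaryGroup_iff'.mp hΔ.eigenvectorUnitary.2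
  have hEE' : E * Eᴴ = 1 := by
    rw [hEdef, ← Matrix.star_eq_conjTranspose]
    exact Matrix.mem_unitaryGroup_iff.mp hΔ.eigenvectorUnitary.2
  have hρdec : ρ = U * Matrix.diagonal (fun i => ((P i : ℝ) : ℂ)) * Uᴴ := by
    rw [hUdef, hPdef, ← Matrix.star_eq_conjTranspose]
    convert hρH.spectral_theorem using 3
    rw [Unitary.conjStarAlgAut_apply]; rfl
  have hσdec : σ = V * Matrix.diagonal (fun j => ((Q j : ℝ) : ℂ)) * Vᴴ := by
    rw [hVdef, hQdef, ← Matrix.star_eq_conjTranspose]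
    convert hσH.spectral_theorem using 3
    rw [Unitary.conjStarAlgAut_apply]; rfl
  have hΔdec : ρ - σ = E * Matrix.diagonal (fun k => ((D k : ℝ) : ℂ)) * Eᴴ := by
    rw [hEdef, hDdef, ← Matrix.star_eq_conjTranspose]
    convert hΔ.spectral_theorem using 3
    rw [Unitary.conjStarAlgAut_apply]; rfl
  have hPnn : ∀ i, 0 ≤ P i := fun i => hρPSD.eigenvalues_nonneg i
  have hQpos : ∀ j, 0 < Q j := fun j => hσ.eigenvalues_pos j
  -- traces of spectral forms
  have trace_spec : ∀ (X : Matrix m m ℂ) (f : m → ℝ), Xᴴ * X = 1 →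
      (X * Matrix.diagonal (fun i => ((f i : ℝ) : ℂ)) * Xᴴ).trace = ((∑ i, f i : ℝ) : ℂ) := by
    intro X f hX
    rw [Matrix.trace_mul_comm, ← Matrix.mul_assoc, hX, one_mul, Matrix.trace_diagonal]
    rw [Complex.ofReal_sum]
  have sumP : ∑ i, P i = 1 := by
    have h := trace_spec U P hUU
    rw [← hρdec, hρtr] at h
    exact_mod_cast h.symm
  have sumQ : ∑ j, Q j = 1 := by
    have h := trace_spec V Q hVV
    rw [← hσdec, hσt] at h
    exact_mod_cast h.symm
  -- overlap matrix
  set W : Matrix m m ℂ := Uᴴ * V with hWdef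
  set w : m → m → ℝ := fun i j => Complex.normSq (W i j) with hwdef
  have hWW : W * Wᴴ = 1 := by
    rw [hWdef, Matrix.conjTranspose_mul, Matrix.conjTranspose_conjTranspose]
    have h : Uᴴ * V * (Vᴴ * U) = Uᴴ * (V * Vᴴ) * U := by simp only [Matrix.mul_assoc]
    rw [h, hVV', Matrix.mul_one, hUU]
  have hWW' : Wᴴ * W = 1 := by
    rw [hWdef, Matrix.conjTranspose_mul, Matrix.conjTranspose_conjTranspose]
    have h : Vᴴ * U * (Uᴴ * V) = Vᴴ * (U * Uᴴ) * V := by simp only [Matrix.mul_assoc]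
    rw [h, hUU', Matrix.mul_one, hVV]
  have row_sum : ∀ (X : Matrix m m ℂ), X * Xᴴ = 1 → ∀ i, ∑ j, Complex.normSq (X i j) = 1 := by
    intro X hX i
    have h1 : (X * Xᴴ) i i = 1 := by rw [hX]; simp [Matrix.one_apply]
    rw [Matrix.mul_apply] at h1
    have h2 : ∀ j, X i j * Xᴴ j i = ((Complex.normSq (X i j) : ℝ) : ℂ) := by
      intro j; rw [Matrix.conjTranspose_apply]; exact Complex.mul_conj _
    rw [Finset.sum_congr rfl (fun j _ => h2 j), ← Complex.ofReal_sum] at h1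
    exact_mod_cast h1
  have col_sum : ∀ (X : Matrix m m ℂ), Xᴴ * X = 1 → ∀ j, ∑ i, Complex.normSq (X i j) = 1 := by
    intro X hX j
    have h1 : (Xᴴ * X) j j = 1 := by rw [hX]; simp [Matrix.one_apply]
    rw [Matrix.mul_apply] at h1
    have h2 : ∀ i, Xᴴ j i * X i j = ((Complex.normSq (X i j) : ℝ) : ℂ) := by
      intro i; rw [Matrix.conjTranspose_apply, mul_comm]; exact Complex.mul_conj _
    rw [Finset.sum_congr rfl (fun i _ => h2 i), ← Complex.ofReal_sum] at h1
    exact_mod_cast h1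
  have rowW : ∀ i, ∑ j, w i j = 1 := row_sum W hWW
  have colW : ∀ j, ∑ i, w i j = 1 := col_sum W hWW'
  -- relative entropy in terms of eigen-data
  have hlogρ : matFun Real.log ρ
      = U * Matrix.diagonal (fun i => ((Real.log (P i) : ℝ) : ℂ)) * Uᴴ := by
    unfold matFun
    rw [dif_pos hρH]
  have hlogσ : matFun Real.log σ
      = V * Matrix.diagonal (fun j => ((Real.log (Q j) : ℝ) : ℂ)) * Vᴴ := by
    unfold matFun
    rw [dif_pos hσH]
  have hre1 : ((ρ * matFun Real.log ρ).trace).re = ∑ i, P i * Real.log (P i) := by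
    rw [hlogρ, hρdec, trace_conj_pair U U P (fun i => Real.log (P i)), hUU, re_double_sum,
      collapse_sum (fun i j => P i * Real.log (P j))]
  have hre2 : ((ρ * matFun Real.log σ).trace).re = ∑ i, ∑ j, P i * Real.log (Q j) * w i j := by
    rw [hlogσ, hρdec, trace_conj_pair U V P (fun j => Real.log (Q j)), re_double_sum]
  have hrel : relEntropy ρ σ
      = (∑ i, P i * Real.log (P i) - ∑ i, ∑ j, P i * Real.log (Q j) * w i j) / Real.log 2 := by
    rw [relEntropy, Matrix.mul_sub, Matrix.trace_sub, Complex.sub_re, hre1, hre2]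
  -- chi-square-type quantity
  set Δ' : ℝ := ∑ i, ∑ j, (P i - Q j)^2 * w i j / (P i + Q j) with hCdef
  have hln2pos : (0:ℝ) < Real.log 2 := Real.log_pos (by norm_num)
  have hwnn : ∀ i j, 0 ≤ w i j := fun i j => Complex.normSq_nonneg _
  have hDnat : ∑ i, P i * Real.log (P i) - ∑ i, ∑ j, P i * Real.log (Q j) * w i j
      = ∑ i, ∑ j, (P i * Real.log (P i) - P i * Real.log (Q j) - P i + Q j) * w i j := by
    have e1 : ∑ i, P i * Real.log (P i) = ∑ i, ∑ j, P i * Real.log (P i) * w i j := by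
      refine Finset.sum_congr rfl fun i _ => ?_
      rw [← Finset.mul_sum, rowW i, mul_one]
    have e2 : ∑ i, ∑ j, P i * w i j = 1 := by
      calc ∑ i, ∑ j, P i * w i j = ∑ i, P i := by
            refine Finset.sum_congr rfl fun i _ => ?_
            rw [← Finset.mul_sum, rowW i, mul_one]
        _ = 1 := sumP
    have e3 : ∑ i, ∑ j, Q j * w i j = 1 := by
      rw [Finset.sum_comm]
      calc ∑ j, ∑ i, Q j * w i j = ∑ j, Q j := by
            refine Finset.sum_congr rfl fun j _ => ?_
            rw [← Finset.mul_sum, colW j, mul_one]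
        _ = 1 := sumQ
    have expand : ∀ i j : m, (P i * Real.log (P i) - P i * Real.log (Q j) - P i + Q j) * w i j
        = P i * Real.log (P i) * w i j - P i * Real.log (Q j) * w i j
          - P i * w i j + Q j * w i j := fun i j => by ring
    have hsplit : ∑ i, ∑ j, (P i * Real.log (P i) - P i * Real.log (Q j) - P i + Q j) * w i j
        = ∑ i, ∑ j, P i * Real.log (P i) * w i j - ∑ i, ∑ j, P i * Real.log (Q j) * w i j
          - ∑ i, ∑ j, P i * w i j + ∑ i, ∑ j, Q j * w i j := by
      rw [Finset.sum_congr rfl fun i _ => Finset.sum_congr rfl fun j _ => expand i j]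
      simp only [Finset.sum_add_distrib, Finset.sum_sub_distrib]
    rw [hsplit, e2, e3, ← e1]
    ring
  have hChi_le : Real.log 2 * Δ'
      ≤ ∑ i, ∑ j, (P i * Real.log (P i) - P i * Real.log (Q j) - P i + Q j) * w i j := by
    rw [hCdef, Finset.mul_sum]
    refine Finset.sum_le_sum fun i _ => ?_
    rw [Finset.mul_sum]
    refine Finset.sum_le_sum fun j _ => ?_
    have hkey := scalar_key (hPnn i) (hQpos j)
    have hw := hwnn i j
    calc Real.log 2 * ((P i - Q j)^2 * w i j / (P i + Q j))
        = (Real.log 2 * ((P i - Q j)^2 / (P i + Q j))) * w i j := by ring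
      _ ≤ (P i * (Real.log (P i) - Real.log (Q j)) - P i + Q j) * w i j :=
          mul_le_mul_of_nonneg_right hkey hw
      _ = (P i * Real.log (P i) - P i * Real.log (Q j) - P i + Q j) * w i j := by ring
  have hChiRel : Δ' ≤ relEntropy ρ σ := by
    rw [hrel, hDnat, le_div_iff₀ hln2pos]
    calc Δ' * Real.log 2 = Real.log 2 * Δ' := by ring
      _ ≤ _ := hChi_le
  -- sign matrix
  set ε : m → ℝ := fun k => if 0 ≤ D k then 1 else -1 with hεdef
  have hεabs : ∀ k, ε k * D k = |D k| := by
    intro k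
    rw [hεdef]
    by_cases h : 0 ≤ D k
    · simp [h, abs_of_nonneg h]
    · push_neg at h
      simp [not_le.mpr h, abs_of_neg h]
  set K : Matrix m m ℂ := E * Matrix.diagonal (fun k => ((ε k : ℝ) : ℂ)) * Eᴴ with hKdef
  have hdiagH : (Matrix.diagonal (fun k => ((ε k : ℝ) : ℂ)))ᴴ
      = Matrix.diagonal (fun k => ((ε k : ℝ) : ℂ)) := by
    exact Matrix.isHermitian_diagonal_iff.mpr fun k => Complex.conj_ofReal (ε k)
  have hKH : Kᴴ = K := by
    rw [hKdef, Matrix.conjTranspose_mul, Matrix.conjTranspose_mul,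
      Matrix.conjTranspose_conjTranspose, hdiagH]
    simp only [Matrix.mul_assoc]
  have hε2 : ∀ k, ((ε k : ℝ) : ℂ) * ((ε k : ℝ) : ℂ) = 1 := by
    intro k
    rw [hεdef]
    by_cases h : 0 ≤ D k <;> simp [h] <;> norm_num
  have hKK : K * K = 1 := by
    rw [hKdef]
    have h1 : E * Matrix.diagonal (fun k => ((ε k : ℝ) : ℂ)) * Eᴴ
        * (E * Matrix.diagonal (fun k => ((ε k : ℝ) : ℂ)) * Eᴴ)
        = E * (Matrix.diagonal (fun k => ((ε k : ℝ) : ℂ)) * (Eᴴ * E)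
          * (Matrix.diagonal (fun k => ((ε k : ℝ) : ℂ)) * Eᴴ)) := by
      simp only [Matrix.mul_assoc]
    rw [h1, hEE, Matrix.mul_one]
    have h2 : Matrix.diagonal (fun k => ((ε k : ℝ) : ℂ))
        * (Matrix.diagonal (fun k => ((ε k : ℝ) : ℂ)) * Eᴴ)
        = Eᴴ := by
      rw [← Matrix.mul_assoc, Matrix.diagonal_mul_diagonal]
      have : (fun k => ((ε k : ℝ) : ℂ) * ((ε k : ℝ) : ℂ)) = fun _ => (1:ℂ) := by
        funext k; exact hε2 k
      rw [this, Matrix.diagonal_one, one_mul]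
    rw [h2, hEE']
  set M : Matrix m m ℂ := Uᴴ * K * V with hMdef
  set N : Matrix m m ℂ := Vᴴ * U with hNdef
  have hMN : Uᴴ * K * U = M * N := by
    have h1 : M * N = Uᴴ * (K * (V * (Vᴴ * U))) := by
      rw [hMdef, hNdef]; simp only [Matrix.mul_assoc]
    have h2 : V * (Vᴴ * U) = U := by rw [← Matrix.mul_assoc, hVV', one_mul]
    rw [h1, h2, Matrix.mul_assoc]
  have hNM : Vᴴ * K * V = N * M := by
    have h1 : N * M = Vᴴ * (U * (Uᴴ * (K * V))) := by
      rw [hMdef, hNdef]; simp only [Matrix.mul_assoc]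
    have h2 : U * (Uᴴ * (K * V)) = K * V := by rw [← Matrix.mul_assoc, hUU', one_mul]
    rw [h1, h2, Matrix.mul_assoc]
  have hMH : Mᴴ = Vᴴ * K * U := by
    rw [hMdef, Matrix.conjTranspose_mul, Matrix.conjTranspose_mul,
      Matrix.conjTranspose_conjTranspose, hKH]
    simp only [Matrix.mul_assoc]
  have hMM' : M * Mᴴ = 1 := by
    have h1 : M * Mᴴ = Uᴴ * (K * (V * (Vᴴ * (K * U)))) := by
      rw [hMH, hMdef]; simp only [Matrix.mul_assoc]
    have h2 : V * (Vᴴ * (K * U)) = K * U := by rw [← Matrix.mul_assoc, hVV', one_mul]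
    have h3 : K * (K * U) = U := by rw [← Matrix.mul_assoc, hKK, one_mul]
    rw [h1, h2, h3, hUU]
  have hMM : Mᴴ * M = 1 := by
    have h1 : Mᴴ * M = Vᴴ * (K * (U * (Uᴴ * (K * V)))) := by
      rw [hMH, hMdef]; simp only [Matrix.mul_assoc]
    have h2 : U * (Uᴴ * (K * V)) = K * V := by rw [← Matrix.mul_assoc, hUU', one_mul]
    have h3 : K * (K * V) = V := by rw [← Matrix.mul_assoc, hKK, one_mul]
    rw [h1, h2, h3, hVV]
  have rowM : ∀ i, ∑ j, Complex.normSq (M i j) = 1 := row_sum M hMM'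
  have colM : ∀ j, ∑ i, Complex.normSq (M i j) = 1 := col_sum M hMM
  have hNW : ∀ i j, ‖N j i‖ = ‖W i j‖ := by
    intro i j
    have hN : N = Wᴴ := by
      rw [hNdef, hWdef, Matrix.conjTranspose_mul, Matrix.conjTranspose_conjTranspose]
    rw [hN, Matrix.conjTranspose_apply]
    exact Complex.norm_conj _
  -- trace of K(ρ-σ) two ways
  have htrK : ((K * (ρ - σ)).trace).re = ∑ k, |D k| := by
    rw [hΔdec, hKdef, trace_conj_pair E E ε D, hEE, re_double_sum,
      collapse_sum (fun k l => ε k * D l)]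
    exact Finset.sum_congr rfl fun k _ => hεabs k
  have htrsplit : (K * (ρ - σ)).trace
      = ∑ i, ∑ j, (((P i : ℝ) : ℂ) - ((Q j : ℝ) : ℂ)) * (M i j * N j i) := by
    rw [Matrix.mul_sub, Matrix.trace_sub]
    have hKρ : (K * ρ).trace = ∑ i, ((P i : ℝ) : ℂ) * (M * N) i i := by
      rw [hρdec, trace_mul_sand K U P, hMN]
    have hKσ : (K * σ).trace = ∑ j, ((Q j : ℝ) : ℂ) * (N * M) j j := by
      rw [hσdec, trace_mul_sand K V Q, hNM]
    have h1 : ∑ i, ((P i : ℝ) : ℂ) * (M * N) i i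
        = ∑ i, ∑ j, ((P i : ℝ) : ℂ) * (M i j * N j i) := by
      refine Finset.sum_congr rfl fun i _ => ?_
      rw [Matrix.mul_apply, Finset.mul_sum]
    have h2 : ∑ j, ((Q j : ℝ) : ℂ) * (N * M) j j
        = ∑ i, ∑ j, ((Q j : ℝ) : ℂ) * (M i j * N j i) := by
      rw [Finset.sum_comm]
      refine Finset.sum_congr rfl fun j _ => ?_
      rw [Matrix.mul_apply, Finset.mul_sum]
      exact Finset.sum_congr rfl fun i _ => by ring
    rw [hKρ, hKσ, h1, h2, ← Finset.sum_sub_distrib]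
    refine Finset.sum_congr rfl fun i _ => ?_
    rw [← Finset.sum_sub_distrib]
    exact Finset.sum_congr rfl fun j _ => by ring
  have habs : ∑ k, |D k|
      ≤ ∑ i, ∑ j, |P i - Q j| * (‖M i j‖ * ‖W i j‖) := by
    rw [← htrK]
    calc ((K * (ρ - σ)).trace).re ≤ ‖(K * (ρ - σ)).trace‖ := Complex.re_le_norm _
      _ = ‖∑ i, ∑ j, (((P i : ℝ) : ℂ) - ((Q j : ℝ) : ℂ)) * (M i j * N j i)‖ := by
          rw [htrsplit]
      _ ≤ ∑ i, ‖∑ j, (((P i : ℝ) : ℂ) - ((Q j : ℝ) : ℂ)) * (M i j * N j i)‖ :=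
          norm_sum_le _ _
      _ ≤ ∑ i, ∑ j, ‖(((P i : ℝ) : ℂ) - ((Q j : ℝ) : ℂ)) * (M i j * N j i)‖ :=
          Finset.sum_le_sum fun i _ => norm_sum_le _ _
      _ = ∑ i, ∑ j, |P i - Q j| * (‖M i j‖ * ‖W i j‖) := by
          refine Finset.sum_congr rfl fun i _ => Finset.sum_congr rfl fun j _ => ?_
          rw [norm_mul, norm_mul,
            ← Complex.ofReal_sub, Complex.norm_real, Real.norm_eq_abs, hNW i j]
  -- Cauchy-Schwarz
  have hPQpos : ∀ i j, 0 < P i + Q j := fun i j => add_pos_of_nonneg_of_pos (hPnn i) (hQpos j)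
  have hChiNN : 0 ≤ Δ' := by
    rw [hCdef]
    refine Finset.sum_nonneg fun i _ => Finset.sum_nonneg fun j _ => ?_
    exact div_nonneg (mul_nonneg (sq_nonneg _) (hwnn i j)) (hPQpos i j).le
  have hCS : ∑ i, ∑ j, |P i - Q j| * (‖M i j‖ * ‖W i j‖)
      ≤ Real.sqrt Δ' * Real.sqrt 2 := by
    set f : m × m → ℝ := fun z => |P z.1 - Q z.2| * ‖W z.1 z.2‖
      / Real.sqrt (P z.1 + Q z.2) with hfdef
    set g : m × m → ℝ := fun z => Real.sqrt (P z.1 + Q z.2) * ‖M z.1 z.2‖ with hgdef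
    have hfg : ∀ z : m × m, f z * g z
        = |P z.1 - Q z.2| * (‖M z.1 z.2‖ * ‖W z.1 z.2‖) := by
      intro z
      have hs : Real.sqrt (P z.1 + Q z.2) ≠ 0 :=
        (Real.sqrt_pos.mpr (hPQpos z.1 z.2)).ne'
      rw [hfdef, hgdef]
      field_simp
    have hf2 : ∑ z : m × m, (f z)^2 = Δ' := by
      rw [hCdef, Fintype.sum_prod_type]
      refine Finset.sum_congr rfl fun i _ => Finset.sum_congr rfl fun j _ => ?_
      show (|P i - Q j| * ‖W i j‖ / Real.sqrt (P i + Q j))^2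
        = (P i - Q j)^2 * w i j / (P i + Q j)
      have hs : (Real.sqrt (P i + Q j))^2 = P i + Q j := Real.sq_sqrt (hPQpos i j).le
      rw [div_pow, mul_pow, hs, sq_abs, Complex.sq_norm]
    have hg2 : ∑ z : m × m, (g z)^2 = 2 := by
      have hterm : ∀ z : m × m, (g z)^2
          = P z.1 * Complex.normSq (M z.1 z.2) + Q z.2 * Complex.normSq (M z.1 z.2) := by
        intro z
        rw [hgdef]
        have hs : (Real.sqrt (P z.1 + Q z.2))^2 = P z.1 + Q z.2 :=
          Real.sq_sqrt (hPQpos z.1 z.2).le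
        rw [mul_pow, hs, Complex.sq_norm]
        ring
      rw [Finset.sum_congr rfl fun z _ => hterm z, Finset.sum_add_distrib]
      rw [Fintype.sum_prod_type, Fintype.sum_prod_type]
      have ha : ∑ i, ∑ j, P i * Complex.normSq (M i j) = 1 := by
        calc ∑ i, ∑ j, P i * Complex.normSq (M i j) = ∑ i, P i := by
              refine Finset.sum_congr rfl fun i _ => ?_
              rw [← Finset.mul_sum, rowM i, mul_one]
          _ = 1 := sumP
      have hb : ∑ i, ∑ j, Q j * Complex.normSq (M i j) = 1 := by
        rw [Finset.sum_comm]
        calc ∑ j, ∑ i, Q j * Complex.normSq (M i j) = ∑ j, Q j := by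
              refine Finset.sum_congr rfl fun j _ => ?_
              rw [← Finset.mul_sum, colM j, mul_one]
          _ = 1 := sumQ
      rw [ha, hb]
      norm_num
    have hfgnn : 0 ≤ ∑ z : m × m, f z * g z := by
      refine Finset.sum_nonneg fun z _ => ?_
      rw [hfg z]
      positivity
    have hcs2 : (∑ z : m × m, f z * g z)^2 ≤ Δ' * 2 := by
      have := Finset.sum_mul_sq_le_sq_mul_sq Finset.univ f g
      rwa [hf2, hg2] at this
    have hfinal : ∑ z : m × m, f z * g z ≤ Real.sqrt (Δ' * 2) := by
      have h := Real.sqrt_le_sqrt hcs2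
      rwa [Real.sqrt_sq hfgnn] at h
    calc ∑ i, ∑ j, |P i - Q j| * (‖M i j‖ * ‖W i j‖)
        = ∑ z : m × m, f z * g z := by
          rw [Fintype.sum_prod_type]
          exact Finset.sum_congr rfl fun i _ => Finset.sum_congr rfl fun j _ => (hfg (i, j)).symm
      _ ≤ Real.sqrt (Δ' * 2) := hfinal
      _ = Real.sqrt Δ' * Real.sqrt 2 := Real.sqrt_mul hChiNN 2
  -- final assembly
  have hTN : traceNorm (ρ - σ) = ∑ k, |D k| := by
    rw [traceNorm, dif_pos hΔ]
  rw [hTN]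
  calc ∑ k, |D k| ≤ Real.sqrt Δ' * Real.sqrt 2 := le_trans habs hCS
    _ = Real.sqrt 2 * Real.sqrt Δ' := mul_comm _ _
    _ ≤ Real.sqrt 2 * Real.sqrt (relEntropy ρ σ) :=
        mul_le_mul_of_nonneg_left (Real.sqrt_le_sqrt hChiRel) (Real.sqrt_nonneg 2)

end
end
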